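/- Additivity of the RDS integral: for α of bounded variation on [a,b] and m ∈ (a,b), a bounded f is RDS integrable on [a,b] with respect to α if and only if it is RDS integrable on [a,m] and on [m,b]; in that case ∫_a^m f dα + ∫_m^b f dα = ∫_a^b f dα. -/

import Mathlib

open Set Filter Topology
open scoped Classical

noncomputable section

/-- A partition `a = x 0 < x 1 < ... < x n = b` of `[a,b]`. -/
structure RDSPartition (a b : ℝ) where
  n : ℕ
  x : ℕ → ℝ
  mono : ∀ i, i < n → x i < x (i + 1)
  first : x 0 = a
  last : x n = b

/-- Right limit `α(t+)`, with the convention `α(b+) = α(b)` at the right endpoint. -/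
def rLim (b : ℝ) (α : ℝ → ℝ) (t : ℝ) : ℝ :=
  if t < b then Function.rightLim α t else α t

/-- Left limit `α(t-)`, with the convention `α(a-) = α(a)` at the left endpoint. -/
def lLim (a : ℝ) (α : ℝ → ℝ) (t : ℝ) : ℝ :=
  if a < t then Function.leftLim α t else α t

/-- `α`-length of the singleton `{t}` inside `[a,b]`: `α(t+) - α(t-)`. -/
def muPt (a b : ℝ) (α : ℝ → ℝ) (t : ℝ) : ℝ :=
  rLim b α t - lLim a α t

/-- `α`-length of the open interval `(c,d)` inside `[a,b]`: `α(d-) - α(c+)`. -/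
def muIoo (a b : ℝ) (α : ℝ → ℝ) (c d : ℝ) : ℝ :=
  lLim a α d - rLim b α c

/-- `f` is a step function with respect to the partition `P`: it is constant on each
open subinterval `(x (i-1), x i)` of `P`. -/
def IsStepOn (a b : ℝ) (f : ℝ → ℝ) (P : RDSPartition a b) : Prop :=
  ∀ i, i < P.n → ∀ s ∈ Set.Ioo (P.x i) (P.x (i + 1)),
    f s = f ((P.x i + P.x (i + 1)) / 2)

/-- The RDS integral of a step function with respect to the partition `P`:
`Σ_{i=0}^n f(x_i) μ_α({x_i}) + Σ_{i=1}^n c_i μ_α(I_i)`. -/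
def stepInt (a b : ℝ) (α : ℝ → ℝ) (P : RDSPartition a b) (f : ℝ → ℝ) : ℝ :=
  (∑ i ∈ Finset.range (P.n + 1), f (P.x i) * muPt a b α (P.x i)) +
    ∑ i ∈ Finset.range P.n,
      f ((P.x i + P.x (i + 1)) / 2) * muIoo a b α (P.x i) (P.x (i + 1))

/-- Upper envelope: infimum of RDS step integrals of step functions above `f` on `[a,b]`. -/
def upperRDS (a b : ℝ) (α f : ℝ → ℝ) : ℝ :=
  sInf { r | ∃ (u : ℝ → ℝ) (P : RDSPartition a b), IsStepOn a b u P ∧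
    (∀ t ∈ Set.Icc a b, f t ≤ u t) ∧ r = stepInt a b α P u }

/-- Lower envelope: supremum of RDS step integrals of step functions below `f` on `[a,b]`. -/
def lowerRDS (a b : ℝ) (α f : ℝ → ℝ) : ℝ :=
  sSup { r | ∃ (v : ℝ → ℝ) (P : RDSPartition a b), IsStepOn a b v P ∧
    (∀ t ∈ Set.Icc a b, v t ≤ f t) ∧ r = stepInt a b α P v }

/-- RDS integrability with respect to an increasing integrator. -/
def RDSIntegrableInc (a b : ℝ) (α f : ℝ → ℝ) : Prop :=
  lowerRDS a b α f = upperRDS a b α f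

/-- The RDS integral with respect to an increasing integrator. -/
def RDSIntegralInc (a b : ℝ) (α f : ℝ → ℝ) : ℝ := upperRDS a b α f

/-- RDS integrability with respect to a BV integrator: some Jordan decomposition
into increasing functions works. -/
def RDSIntegrable (a b : ℝ) (α f : ℝ → ℝ) : Prop :=
  ∃ αp αm : ℝ → ℝ, MonotoneOn αp (Set.Icc a b) ∧ MonotoneOn αm (Set.Icc a b) ∧
    (∀ t ∈ Set.Icc a b, α t = αp t - αm t) ∧
    RDSIntegrableInc a b αp f ∧ RDSIntegrableInc a b αm f

/-- The RDS integral with respect to a BV integrator. -/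
def RDSIntegral (a b : ℝ) (α f : ℝ → ℝ) : ℝ :=
  if h : RDSIntegrable a b α f then
    RDSIntegralInc a b h.choose f - RDSIntegralInc a b h.choose_spec.choose f
  else 0

/-- `f` is bounded on `[a,b]`. -/
def BddOn (a b : ℝ) (f : ℝ → ℝ) : Prop :=
  ∃ M : ℝ, ∀ t ∈ Set.Icc a b, |f t| ≤ M

end


noncomputable section Aux
open Function

namespace RDSPartition

variable {a b : ℝ} (P : RDSPartition a b)

lemma x_le_x {i j : ℕ} (hij : i ≤ j) (hj : j ≤ P.n) : P.x i ≤ P.x j := by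
  induction j with
  | zero => simp_all
  | succ k ih =>
    rcases Nat.lt_or_ge i (k+1) with h | h
    · exact le_trans (ih (by omega) (by omega)) (le_of_lt (P.mono k (by omega)))
    · have : i = k + 1 := by omega
      simp [this]

lemma x_lt_x {i j : ℕ} (hij : i < j) (hj : j ≤ P.n) : P.x i < P.x j := by
  have h1 : P.x i < P.x (i+1) := P.mono i (by omega)
  exact lt_of_lt_of_le h1 (P.x_le_x (by omega) hj)

lemma x_mem {i : ℕ} (hi : i ≤ P.n) : P.x i ∈ Set.Icc a b := by
  have h1 := P.x_le_x (Nat.zero_le i) hi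
  have h2 := P.x_le_x hi (le_refl P.n)
  rw [P.first] at h1; rw [P.last] at h2
  exact ⟨h1, h2⟩

lemma a_le_b (P : RDSPartition a b) : a ≤ b := by
  have h := P.x_le_x (Nat.zero_le P.n) (le_refl P.n)
  rwa [P.first, P.last] at h

/-- The set of partition points. -/
def pts : Finset ℝ := (Finset.range (P.n + 1)).image P.x

lemma mem_pts {t : ℝ} : t ∈ P.pts ↔ ∃ i, i ≤ P.n ∧ P.x i = t := by
  simp only [pts, Finset.mem_image, Finset.mem_range]
  constructor
  · rintro ⟨i, hi, rfl⟩; exact ⟨i, by omega, rfl⟩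
  · rintro ⟨i, hi, rfl⟩; exact ⟨i, by omega, rfl⟩

lemma a_mem_pts : a ∈ P.pts := P.mem_pts.2 ⟨0, Nat.zero_le _, P.first⟩

lemma b_mem_pts : b ∈ P.pts := P.mem_pts.2 ⟨P.n, le_rfl, P.last⟩

lemma pts_subset : (P.pts : Set ℝ) ⊆ Set.Icc a b := by
  intro t ht
  obtain ⟨i, hi, rfl⟩ := P.mem_pts.1 ht
  exact P.x_mem hi

/-- The sorted list of partition points. -/
def lst : List ℝ := List.ofFn (fun i : Fin (P.n + 1) => P.x i)

lemma lst_sorted : P.lst.Pairwise (· < ·) := by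
  rw [lst, List.pairwise_ofFn]
  intro i j hij
  exact P.x_lt_x hij (by omega)

lemma lst_nodup : P.lst.Nodup := P.lst_sorted.imp (fun h => ne_of_lt h)

lemma lst_toFinset : P.lst.toFinset = P.pts := by
  ext t
  simp only [List.mem_toFinset, lst, List.mem_ofFn, mem_pts]
  constructor
  · rintro ⟨i, rfl⟩; exact ⟨i, by omega, rfl⟩
  · rintro ⟨i, hi, rfl⟩; exact ⟨⟨i, by omega⟩, rfl⟩

lemma canon {P Q : RDSPartition a b} (h : P.pts = Q.pts) :
    P.n = Q.n ∧ ∀ i, i ≤ P.n → P.x i = Q.x i := by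
  haveI : IsAntisymm ℝ (· < ·) := ⟨fun a b h h' => absurd h' (lt_asymm h)⟩
  have hperm : List.Perm P.lst Q.lst :=
    List.perm_of_nodup_nodup_toFinset_eq P.lst_nodup Q.lst_nodup
      (by rw [P.lst_toFinset, Q.lst_toFinset, h])
  have heq : P.lst = Q.lst :=
    List.Perm.eq_of_pairwise' P.lst_sorted Q.lst_sorted hperm
  have hlen : P.n + 1 = Q.n + 1 := by
    have := congrArg List.length heq
    simpa [lst] using this
  have hn : P.n = Q.n := by omega
  refine ⟨hn, fun i hi => ?_⟩
  have hilen : i < P.lst.length := by simp [lst]; omega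
  have h1 := List.getElem_of_eq heq hilen
  simpa only [lst, List.getElem_ofFn] using h1

end RDSPartition

end Aux
section LimLemmas
open Function

variable {g h : ℝ → ℝ}

lemma rightLim_congr_mono (hg : Monotone g) {t : ℝ} (heq : h =ᶠ[𝓝[>] t] g) :
    Function.rightLim h t = Function.rightLim g t := by
  have hne : 𝓝[>] t ≠ ⊥ := (nhdsGT_neBot t).ne'
  exact rightLim_eq_of_tendsto ((hg.tendsto_rightLim t).congr' heq.symm)

lemma leftLim_congr_mono (hg : Monotone g) {t : ℝ} (heq : h =ᶠ[𝓝[<] t] g) :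
    Function.leftLim h t = Function.leftLim g t := by
  have hne : 𝓝[<] t ≠ ⊥ := (nhdsLT_neBot t).ne'
  exact leftLim_eq_of_tendsto ((hg.tendsto_leftLim t).congr' heq.symm)

/-- `rLim` only depends on values of the integrator on `[a', b']` when `t ∈ [a', b0]`,
`b0 ≤ b'`. -/
lemma rLim_congr {a' b' b0 t : ℝ} (hg : Monotone g)
    (heq : Set.EqOn h g (Set.Icc a' b')) (ht : a' ≤ t) (htb : t ≤ b0) (hb : b0 ≤ b') :
    rLim b0 h t = rLim b0 g t := by
  unfold rLim
  by_cases hlt : t < b0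
  · rw [if_pos hlt, if_pos hlt]
    apply rightLim_congr_mono hg
    filter_upwards [Ioo_mem_nhdsGT_of_mem (Set.mem_Ico.2 ⟨le_rfl, hlt⟩)] with s hs
    exact heq ⟨le_trans ht (le_of_lt hs.1), le_trans (le_of_lt hs.2) hb⟩
  · rw [if_neg hlt, if_neg hlt]
    exact heq ⟨ht, le_trans htb hb⟩

lemma lLim_congr {a' b' a0 t : ℝ} (hg : Monotone g)
    (heq : Set.EqOn h g (Set.Icc a' b')) (ht : a0 ≤ t) (htb : t ≤ b') (ha : a' ≤ a0) :
    lLim a0 h t = lLim a0 g t := by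
  unfold lLim
  by_cases hlt : a0 < t
  · rw [if_pos hlt, if_pos hlt]
    apply leftLim_congr_mono hg
    filter_upwards [Ioo_mem_nhdsLT_of_mem (Set.mem_Ioc.2 ⟨hlt, le_rfl⟩)] with s hs
    exact heq ⟨le_trans ha (le_of_lt hs.1), le_trans (le_of_lt hs.2) htb⟩
  · rw [if_neg hlt, if_neg hlt]
    exact heq ⟨le_trans ha ht, htb⟩

lemma lLim_le_self (hg : Monotone g) (a t : ℝ) : lLim a g t ≤ g t := by
  unfold lLim
  split
  · exact hg.leftLim_le le_rfl
  · exact le_rfl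

lemma self_le_rLim (hg : Monotone g) (b t : ℝ) : g t ≤ rLim b g t := by
  unfold rLim
  split
  · exact hg.le_rightLim le_rfl
  · exact le_rfl

lemma rLim_le_lLim (hg : Monotone g) {a b s t : ℝ} (hst : s < t) :
    rLim b g s ≤ lLim a g t := by
  unfold rLim lLim
  split <;> split
  · exact hg.rightLim_le_leftLim hst
  · exact hg.rightLim_le hst
  · exact hg.le_leftLim hst
  · exact hg hst.le

lemma muPt_nonneg (hg : Monotone g) (a b t : ℝ) : 0 ≤ muPt a b g t := by
  have := lLim_le_self hg a t
  have := self_le_rLim hg b t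
  unfold muPt; linarith

lemma muIoo_nonneg (hg : Monotone g) {a b s t : ℝ} (hst : s < t) : 0 ≤ muIoo a b g s t := by
  have := rLim_le_lLim hg (a := a) (b := b) hst
  unfold muIoo; linarith

lemma rLim_add (hg : Monotone g) (hh : Monotone h) (b t : ℝ) :
    rLim b (fun s => g s + h s) t = rLim b g t + rLim b h t := by
  unfold rLim
  split
  · have hne : 𝓝[>] t ≠ ⊥ := (nhdsGT_neBot t).ne'
    exact rightLim_eq_of_tendsto ((hg.tendsto_rightLim t).add (hh.tendsto_rightLim t))
  · rfl

lemma lLim_add (hg : Monotone g) (hh : Monotone h) (a t : ℝ) :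
    lLim a (fun s => g s + h s) t = lLim a g t + lLim a h t := by
  unfold lLim
  split
  · have hne : 𝓝[<] t ≠ ⊥ := (nhdsLT_neBot t).ne'
    exact leftLim_eq_of_tendsto ((hg.tendsto_leftLim t).add (hh.tendsto_leftLim t))
  · rfl

lemma rLim_self (b : ℝ) : rLim b g b = g b := by unfold rLim; simp

lemma lLim_self (a : ℝ) : lLim a g a = g a := by unfold lLim; simp

end LimLemmas
section StepIntLemmas
open Function

variable {a b : ℝ} {g h u v : ℝ → ℝ}

lemma isStepOn_congr {P Q : RDSPartition a b} (hn : P.n = Q.n)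
    (hx : ∀ i, i ≤ P.n → P.x i = Q.x i) (hu : IsStepOn a b u P) : IsStepOn a b u Q := by
  intro i hi s hs
  rw [← hx i (by omega), ← hx (i+1) (by omega)] at hs ⊢
  exact hu i (by omega) s hs

lemma stepInt_congr {P Q : RDSPartition a b} (hn : P.n = Q.n)
    (hx : ∀ i, i ≤ P.n → P.x i = Q.x i) : stepInt a b g P u = stepInt a b g Q u := by
  unfold stepInt
  rw [← hn]
  congr 1
  · exact Finset.sum_congr rfl fun i hi => by
      rw [hx i (by simp at hi; omega)]
  · exact Finset.sum_congr rfl fun i hi => by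
      rw [hx i (by simp at hi; omega), hx (i+1) (by simp at hi; omega)]

lemma stepInt_mono_u (hg : Monotone g) (P : RDSPartition a b)
    (huv : ∀ t ∈ Set.Icc a b, u t ≤ v t) : stepInt a b g P u ≤ stepInt a b g P v := by
  unfold stepInt
  apply add_le_add
  · apply Finset.sum_le_sum
    intro i hi
    simp only [Finset.mem_range] at hi
    exact mul_le_mul_of_nonneg_right (huv _ (P.x_mem (by omega))) (muPt_nonneg hg a b _)
  · apply Finset.sum_le_sum
    intro i hi
    simp only [Finset.mem_range] at hi
    have h1 := P.x_mem (i := i) (by omega)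
    have h2 := P.x_mem (i := i+1) (by omega)
    have hmid : (P.x i + P.x (i+1)) / 2 ∈ Set.Icc a b := by
      constructor
      · have := h1.1; have := h2.1; linarith
      · have := h1.2; have := h2.2; linarith
    exact mul_le_mul_of_nonneg_right (huv _ hmid)
      (muIoo_nonneg hg (P.mono i hi))

/-- Telescoping identity for sums used in `stepInt`. -/
lemma telescope_aux (F G : ℕ → ℝ) (n : ℕ) :
    (∑ i ∈ Finset.range (n + 1), (F i - G i)) +
      (∑ i ∈ Finset.range n, (G (i + 1) - F i)) = F n - G 0 := by
  induction n with
  | zero => simp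
  | succ k ih =>
    rw [Finset.sum_range_succ (f := fun i => F i - G i) (n := k + 1),
      Finset.sum_range_succ (f := fun i => G (i + 1) - F i) (n := k)]
    linarith

lemma stepInt_const (P : RDSPartition a b) (c : ℝ) :
    stepInt a b g P (fun _ => c) = c * (g b - g a) := by
  unfold stepInt muPt muIoo
  have h1 : ∀ i ∈ Finset.range (P.n + 1),
      c * (rLim b g (P.x i) - lLim a g (P.x i)) =
      c * ((rLim b g ∘ P.x) i - (lLim a g ∘ P.x) i) := fun i _ => rfl
  have h2 : ∀ i ∈ Finset.range P.n,
      c * (lLim a g (P.x (i+1)) - rLim b g (P.x i)) =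
      c * ((lLim a g ∘ P.x) (i+1) - (rLim b g ∘ P.x) i) := fun i _ => rfl
  rw [Finset.sum_congr rfl h1, Finset.sum_congr rfl h2, ← Finset.mul_sum, ← Finset.mul_sum,
    ← mul_add, telescope_aux (rLim b g ∘ P.x) (lLim a g ∘ P.x) P.n]
  simp only [comp_apply, P.first, P.last, rLim_self, lLim_self]

lemma stepInt_add_integrator (hg : Monotone g) (hh : Monotone h) (P : RDSPartition a b) :
    stepInt a b (fun t => g t + h t) P u = stepInt a b g P u + stepInt a b h P u := by
  unfold stepInt muPt muIoo
  simp only [rLim_add hg hh, lLim_add hg hh]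
  have e1 : ∀ i ∈ Finset.range (P.n + 1),
      u (P.x i) * (rLim b g (P.x i) + rLim b h (P.x i) -
        (lLim a g (P.x i) + lLim a h (P.x i))) =
      u (P.x i) * (rLim b g (P.x i) - lLim a g (P.x i)) +
      u (P.x i) * (rLim b h (P.x i) - lLim a h (P.x i)) := fun i _ => by ring
  have e2 : ∀ i ∈ Finset.range P.n,
      u ((P.x i + P.x (i + 1)) / 2) * (lLim a g (P.x (i + 1)) + lLim a h (P.x (i + 1)) -
        (rLim b g (P.x i) + rLim b h (P.x i))) =
      u ((P.x i + P.x (i + 1)) / 2) * (lLim a g (P.x (i + 1)) - rLim b g (P.x i)) +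
      u ((P.x i + P.x (i + 1)) / 2) * (lLim a h (P.x (i + 1)) - rLim b h (P.x i)) :=
    fun i _ => by ring
  rw [Finset.sum_congr rfl e1, Finset.sum_congr rfl e2, Finset.sum_add_distrib,
    Finset.sum_add_distrib]
  ring

/-- `stepInt` only depends on the integrator's values on `[a', b'] ⊇ [a, b]`. -/
lemma stepInt_congr_integrator {a' b' : ℝ} (hg : Monotone g)
    (heq : Set.EqOn h g (Set.Icc a' b')) (ha : a' ≤ a) (hb : b ≤ b') (P : RDSPartition a b) :
    stepInt a b h P u = stepInt a b g P u := by
  unfold stepInt muPt muIoo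
  congr 1
  · apply Finset.sum_congr rfl
    intro i hi
    simp only [Finset.mem_range] at hi
    have hx := P.x_mem (i := i) (by omega)
    rw [rLim_congr hg heq (le_trans ha hx.1) hx.2 hb,
      lLim_congr hg heq hx.1 (le_trans hx.2 hb) ha]
  · apply Finset.sum_congr rfl
    intro i hi
    simp only [Finset.mem_range] at hi
    have hx1 := P.x_mem (i := i) (by omega)
    have hx2 := P.x_mem (i := i+1) (by omega)
    rw [rLim_congr hg heq (le_trans ha hx1.1) hx1.2 hb,
      lLim_congr hg heq hx2.1 (le_trans hx2.2 hb) ha]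

/-- The two-point partition of `[a,b]`. -/
def RDSPartition.trivial (hab : a < b) : RDSPartition a b where
  n := 1
  x := fun i => if i = 0 then a else b
  mono := fun i hi => by
    have : i = 0 := by omega
    simp [this, hab]
  first := by simp
  last := by simp

lemma isStepOn_const (c : ℝ) (P : RDSPartition a b) :
    IsStepOn a b (fun _ => c) P := fun _ _ _ _ => rfl

end StepIntLemmas
noncomputable section InsertLemmas
open Function

variable {a b : ℝ} {u : ℝ → ℝ}

lemma sum_ins1 {F F' : ℕ → ℝ} {n k : ℕ} (hk : k ≤ n)
    (h1 : ∀ i, i ≤ k → F' i = F i) (h2 : ∀ i, k < i → i ≤ n → F' (i + 1) = F i) :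
    ∑ i ∈ Finset.range (n + 2), F' i = (∑ i ∈ Finset.range (n + 1), F i) + F' (k + 1) := by
  have split1 : ∑ i ∈ Finset.range (n + 2), F' i =
      (∑ i ∈ Finset.range (k + 1), F' i) + ∑ i ∈ Finset.Ico (k + 1) (n + 2), F' i := by
    rw [Finset.range_eq_Ico, ← Finset.sum_Ico_consecutive _ (by omega : 0 ≤ k + 1) (by omega),
      ← Finset.range_eq_Ico]
  have split2 : ∑ i ∈ Finset.Ico (k + 1) (n + 2), F' i =
      F' (k + 1) + ∑ i ∈ Finset.Ico (k + 2) (n + 2), F' i :=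
    Finset.sum_eq_sum_Ico_succ_bot (by omega) _
  have shift : ∑ i ∈ Finset.Ico (k + 2) (n + 2), F' i =
      ∑ i ∈ Finset.Ico (k + 1) (n + 1), F i := by
    rw [Finset.sum_Ico_eq_sum_range, Finset.sum_Ico_eq_sum_range]
    have e : n + 2 - (k + 2) = n + 1 - (k + 1) := by omega
    rw [e]
    apply Finset.sum_congr rfl
    intro i hi
    simp only [Finset.mem_range] at hi
    have e2 : k + 2 + i = (k + 1 + i) + 1 := by omega
    rw [e2, h2 (k + 1 + i) (by omega) (by omega)]
  have split3 : ∑ i ∈ Finset.range (n + 1), F i =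
      (∑ i ∈ Finset.range (k + 1), F i) + ∑ i ∈ Finset.Ico (k + 1) (n + 1), F i := by
    rw [Finset.range_eq_Ico, ← Finset.sum_Ico_consecutive _ (by omega : 0 ≤ k + 1) (by omega),
      ← Finset.range_eq_Ico]
  have hfir : ∑ i ∈ Finset.range (k + 1), F' i = ∑ i ∈ Finset.range (k + 1), F i :=
    Finset.sum_congr rfl fun i hi => h1 i (by simp only [Finset.mem_range] at hi; omega)
  linarith

lemma sum_ins2 {G G' : ℕ → ℝ} {n k : ℕ} (hk : k < n)
    (h1 : ∀ i, i < k → G' i = G i) (h2 : ∀ i, k < i → i < n → G' (i + 1) = G i) :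
    ∑ i ∈ Finset.range (n + 1), G' i =
      (∑ i ∈ Finset.range n, G i) - G k + G' k + G' (k + 1) := by
  have split1 : ∑ i ∈ Finset.range (n + 1), G' i =
      (∑ i ∈ Finset.range k, G' i) + ∑ i ∈ Finset.Ico k (n + 1), G' i := by
    rw [Finset.range_eq_Ico, ← Finset.sum_Ico_consecutive _ (by omega : 0 ≤ k) (by omega),
      ← Finset.range_eq_Ico]
  have split2 : ∑ i ∈ Finset.Ico k (n + 1), G' i =
      G' k + ∑ i ∈ Finset.Ico (k + 1) (n + 1), G' i :=
    Finset.sum_eq_sum_Ico_succ_bot (by omega) _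
  have split2' : ∑ i ∈ Finset.Ico (k + 1) (n + 1), G' i =
      G' (k + 1) + ∑ i ∈ Finset.Ico (k + 2) (n + 1), G' i :=
    Finset.sum_eq_sum_Ico_succ_bot (by omega) _
  have shift : ∑ i ∈ Finset.Ico (k + 2) (n + 1), G' i =
      ∑ i ∈ Finset.Ico (k + 1) n, G i := by
    rw [Finset.sum_Ico_eq_sum_range, Finset.sum_Ico_eq_sum_range]
    have e : n + 1 - (k + 2) = n - (k + 1) := by omega
    rw [e]
    apply Finset.sum_congr rfl
    intro i hi
    simp only [Finset.mem_range] at hi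
    have e2 : k + 2 + i = (k + 1 + i) + 1 := by omega
    rw [e2, h2 (k + 1 + i) (by omega) (by omega)]
  have split3 : ∑ i ∈ Finset.range n, G i =
      (∑ i ∈ Finset.range k, G i) + ∑ i ∈ Finset.Ico k n, G i := by
    rw [Finset.range_eq_Ico, ← Finset.sum_Ico_consecutive _ (by omega : 0 ≤ k) (by omega),
      ← Finset.range_eq_Ico]
  have split4 : ∑ i ∈ Finset.Ico k n, G i = G k + ∑ i ∈ Finset.Ico (k + 1) n, G i :=
    Finset.sum_eq_sum_Ico_succ_bot (by omega) _
  have hfir : ∑ i ∈ Finset.range k, G' i = ∑ i ∈ Finset.range k, G i :=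
    Finset.sum_congr rfl fun i hi => h1 i (Finset.mem_range.1 hi)
  linarith

namespace RDSPartition

/-- Index of the last partition point strictly below `y`. -/
def insIdx (P : RDSPartition a b) (y : ℝ) : ℕ := Nat.findGreatest (fun i => P.x i < y) P.n

variable (P : RDSPartition a b) {y : ℝ}

lemma insIdx_spec (hy : y ∈ Set.Ioo a b) (hynot : y ∉ P.pts) :
    P.insIdx y < P.n ∧ P.x (P.insIdx y) < y ∧ y < P.x (P.insIdx y + 1) := by
  have h0 : (fun i => P.x i < y) 0 := by
    simp only [P.first]; exact hy.1
  have hspec : P.x (P.insIdx y) < y :=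
    Nat.findGreatest_spec (P := fun i => P.x i < y) (Nat.zero_le P.n) h0
  have hkn : P.insIdx y ≤ P.n := Nat.findGreatest_le _
  have hklt : P.insIdx y < P.n := by
    rcases Nat.lt_or_ge (P.insIdx y) P.n with h | h
    · exact h
    · exfalso
      have e : P.insIdx y = P.n := by omega
      rw [e, P.last] at hspec
      exact absurd hspec (not_lt.2 hy.2.le)
  have hdef : P.insIdx y = Nat.findGreatest (fun i => P.x i < y) P.n := rfl
  have hgt : ¬ P.x (P.insIdx y + 1) < y :=
    Nat.findGreatest_is_greatest (P := fun i => P.x i < y) (n := P.n) (by omega) (by omega)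
  have hne : P.x (P.insIdx y + 1) ≠ y := fun h => hynot (P.mem_pts.2 ⟨_, by omega, h⟩)
  exact ⟨hklt, hspec, lt_of_le_of_ne (not_lt.1 hgt) (Ne.symm hne)⟩

/-- Insert a new point `y` into a partition. -/
def insertPt (P : RDSPartition a b) (y : ℝ) (hy : y ∈ Set.Ioo a b) (hynot : y ∉ P.pts) :
    RDSPartition a b where
  n := P.n + 1
  x := fun i => if i ≤ P.insIdx y then P.x i else if i = P.insIdx y + 1 then y else P.x (i - 1)
  mono := by
    obtain ⟨hkn, hlt, hgt⟩ := P.insIdx_spec hy hynot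
    intro i hi
    split_ifs with h1 h2 h3 h4 h5 h6 h7 h8 <;> try omega
    · exact P.mono i (by omega)
    · have e : i = P.insIdx y := by omega
      rw [e]; exact hlt
    · have e : i + 1 - 1 = P.insIdx y + 1 := by omega
      rw [e]; exact hgt
    · have e : i + 1 - 1 = (i - 1) + 1 := by omega
      rw [e]; exact P.mono (i - 1) (by omega)
  first := by simp [P.first]
  last := by
    obtain ⟨hkn, _, _⟩ := P.insIdx_spec hy hynot
    rw [if_neg (by omega : ¬ P.n + 1 ≤ P.insIdx y),
      if_neg (by omega : ¬ P.n + 1 = P.insIdx y + 1)]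
    have e : P.n + 1 - 1 = P.n := by omega
    rw [e]; exact P.last

lemma insertPt_n (hy : y ∈ Set.Ioo a b) (hynot : y ∉ P.pts) :
    (P.insertPt y hy hynot).n = P.n + 1 := rfl

lemma insertPt_x (hy : y ∈ Set.Ioo a b) (hynot : y ∉ P.pts) (i : ℕ) :
    (P.insertPt y hy hynot).x i =
      if i ≤ P.insIdx y then P.x i else if i = P.insIdx y + 1 then y else P.x (i - 1) := rfl

lemma insertPt_x_le (hy : y ∈ Set.Ioo a b) (hynot : y ∉ P.pts) {i : ℕ}
    (hi : i ≤ P.insIdx y) : (P.insertPt y hy hynot).x i = P.x i := by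
  rw [insertPt_x, if_pos hi]

lemma insertPt_x_mid (hy : y ∈ Set.Ioo a b) (hynot : y ∉ P.pts) :
    (P.insertPt y hy hynot).x (P.insIdx y + 1) = y := by
  rw [insertPt_x, if_neg (by omega), if_pos rfl]

lemma insertPt_x_gt (hy : y ∈ Set.Ioo a b) (hynot : y ∉ P.pts) {i : ℕ}
    (hi : P.insIdx y + 1 < i) : (P.insertPt y hy hynot).x i = P.x (i - 1) := by
  rw [insertPt_x, if_neg (by omega), if_neg (by omega)]

lemma insertPt_pts (hy : y ∈ Set.Ioo a b) (hynot : y ∉ P.pts) :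
    (P.insertPt y hy hynot).pts = insert y P.pts := by
  obtain ⟨hkn, hlt, hgt⟩ := P.insIdx_spec hy hynot
  ext t
  simp only [Finset.mem_insert, mem_pts, insertPt_n]
  constructor
  · rintro ⟨i, hi, rfl⟩
    rcases Nat.lt_trichotomy i (P.insIdx y + 1) with h | h | h
    · right; exact ⟨i, by omega, by rw [P.insertPt_x_le hy hynot (by omega)]⟩
    · left; rw [h, P.insertPt_x_mid hy hynot]
    · right; exact ⟨i - 1, by omega, by rw [P.insertPt_x_gt hy hynot h]⟩
  · rintro (ht | ⟨i, hi, rfl⟩)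
    · exact ⟨P.insIdx y + 1, by omega, (P.insertPt_x_mid hy hynot).trans ht.symm⟩
    · rcases le_or_gt i (P.insIdx y) with h | h
      · exact ⟨i, by omega, P.insertPt_x_le hy hynot h⟩
      · refine ⟨i + 1, by omega, ?_⟩
        rw [P.insertPt_x_gt hy hynot (by omega)]
        simp

end RDSPartition

end InsertLemmas
noncomputable section RefineLemmas
open Function

variable {a b : ℝ} {u α : ℝ → ℝ}

namespace RDSPartition

variable (P : RDSPartition a b) {y : ℝ}

lemma insertPt_isStepOn (hy : y ∈ Set.Ioo a b) (hynot : y ∉ P.pts)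
    (hu : IsStepOn a b u P) : IsStepOn a b u (P.insertPt y hy hynot) := by
  obtain ⟨hkn, hlt, hgt⟩ := P.insIdx_spec hy hynot
  intro i hi s hs
  rw [insertPt_n] at hi
  rcases Nat.lt_or_ge (i + 1) (P.insIdx y + 1) with h | h
  · rw [P.insertPt_x_le hy hynot (by omega), P.insertPt_x_le hy hynot (by omega)] at hs ⊢
    exact hu i (by omega) s hs
  rcases Nat.eq_or_lt_of_le h with h' | h'
  · -- i = insIdx y
    have hik : i = P.insIdx y := by omega
    rw [hik] at hs ⊢
    rw [P.insertPt_x_le hy hynot le_rfl, P.insertPt_x_mid hy hynot] at hs ⊢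
    have e1 : u s = u ((P.x (P.insIdx y) + P.x (P.insIdx y + 1)) / 2) :=
      hu (P.insIdx y) (by omega) s ⟨hs.1, lt_trans hs.2 hgt⟩
    have e2 : u ((P.x (P.insIdx y) + y) / 2) =
        u ((P.x (P.insIdx y) + P.x (P.insIdx y + 1)) / 2) :=
      hu (P.insIdx y) (by omega) _ ⟨by linarith, by linarith⟩
    rw [e1, e2]
  rcases Nat.eq_or_lt_of_le h' with h'' | h''
  · -- i = insIdx y + 1
    have hik : i = P.insIdx y + 1 := by omega
    rw [hik] at hs ⊢
    rw [P.insertPt_x_mid hy hynot, P.insertPt_x_gt hy hynot (by omega)] at hs ⊢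
    have e : P.insIdx y + 1 + 1 - 1 = P.insIdx y + 1 := by omega
    rw [e] at hs ⊢
    have e1 : u s = u ((P.x (P.insIdx y) + P.x (P.insIdx y + 1)) / 2) :=
      hu (P.insIdx y) (by omega) s ⟨lt_trans hlt hs.1, hs.2⟩
    have e2 : u ((y + P.x (P.insIdx y + 1)) / 2) =
        u ((P.x (P.insIdx y) + P.x (P.insIdx y + 1)) / 2) :=
      hu (P.insIdx y) (by omega) _ ⟨by linarith [hlt, hgt], by linarith [hgt]⟩
    rw [e1, e2]
  · -- i > insIdx y + 1
    rw [P.insertPt_x_gt hy hynot (by omega), P.insertPt_x_gt hy hynot (by omega)] at hs ⊢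
    have e : i + 1 - 1 = (i - 1) + 1 := by omega
    rw [e] at hs ⊢
    exact hu (i - 1) (by omega) s hs

lemma insertPt_stepInt (hy : y ∈ Set.Ioo a b) (hynot : y ∉ P.pts)
    (hu : IsStepOn a b u P) :
    stepInt a b α (P.insertPt y hy hynot) u = stepInt a b α P u := by
  obtain ⟨hkn, hlt, hgt⟩ := P.insIdx_spec hy hynot
  have hQn : (P.insertPt y hy hynot).n = P.n + 1 := rfl
  have hpt : ∑ i ∈ Finset.range ((P.insertPt y hy hynot).n + 1),
        u ((P.insertPt y hy hynot).x i) * muPt a b α ((P.insertPt y hy hynot).x i) =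
      (∑ i ∈ Finset.range (P.n + 1), u (P.x i) * muPt a b α (P.x i)) +
        u y * muPt a b α y := by
    rw [hQn]
    have key := sum_ins1 (F := fun i => u (P.x i) * muPt a b α (P.x i))
      (F' := fun i => u ((P.insertPt y hy hynot).x i) * muPt a b α ((P.insertPt y hy hynot).x i))
      (n := P.n) (k := P.insIdx y)
      (by omega)
      (fun i hi => by rw [P.insertPt_x_le hy hynot hi])
      (fun i hi1 hi2 => by
        rw [P.insertPt_x_gt hy hynot (by omega)]
        have e : i + 1 - 1 = i := by omega
        rw [e])
    rw [key, P.insertPt_x_mid hy hynot]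
  have hiv : ∑ i ∈ Finset.range (P.insertPt y hy hynot).n,
        u (((P.insertPt y hy hynot).x i + (P.insertPt y hy hynot).x (i + 1)) / 2) *
          muIoo a b α ((P.insertPt y hy hynot).x i) ((P.insertPt y hy hynot).x (i + 1)) =
      (∑ i ∈ Finset.range P.n,
        u ((P.x i + P.x (i + 1)) / 2) * muIoo a b α (P.x i) (P.x (i + 1)))
        - u ((P.x (P.insIdx y) + P.x (P.insIdx y + 1)) / 2) *
            muIoo a b α (P.x (P.insIdx y)) (P.x (P.insIdx y + 1))
        + u ((P.x (P.insIdx y) + y) / 2) * muIoo a b α (P.x (P.insIdx y)) y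
        + u ((y + P.x (P.insIdx y + 1)) / 2) * muIoo a b α y (P.x (P.insIdx y + 1)) := by
    rw [hQn]
    have key := sum_ins2
      (G := fun i => u ((P.x i + P.x (i + 1)) / 2) * muIoo a b α (P.x i) (P.x (i + 1)))
      (G' := fun i => u (((P.insertPt y hy hynot).x i + (P.insertPt y hy hynot).x (i + 1)) / 2) *
          muIoo a b α ((P.insertPt y hy hynot).x i) ((P.insertPt y hy hynot).x (i + 1)))
      (n := P.n) (k := P.insIdx y) (by omega)
      (fun i hi => by
        rw [P.insertPt_x_le hy hynot (by omega), P.insertPt_x_le hy hynot (by omega)])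
      (fun i hi1 hi2 => by
        rw [P.insertPt_x_gt hy hynot (by omega), P.insertPt_x_gt hy hynot (by omega)]
        have e1 : i + 1 - 1 = i := by omega
        have e2 : i + 1 + 1 - 1 = i + 1 := by omega
        rw [e1, e2])
    rw [key, P.insertPt_x_le hy hynot le_rfl, P.insertPt_x_mid hy hynot,
      P.insertPt_x_gt hy hynot (by omega)]
    have e : P.insIdx y + 1 + 1 - 1 = P.insIdx y + 1 := by omega
    rw [e]
    try ring
  have hc : u y = u ((P.x (P.insIdx y) + P.x (P.insIdx y + 1)) / 2) :=
    hu (P.insIdx y) (by omega) y ⟨hlt, hgt⟩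
  have hc1 : u ((P.x (P.insIdx y) + y) / 2) =
      u ((P.x (P.insIdx y) + P.x (P.insIdx y + 1)) / 2) :=
    hu (P.insIdx y) (by omega) _ ⟨by linarith, by linarith⟩
  have hc2 : u ((y + P.x (P.insIdx y + 1)) / 2) =
      u ((P.x (P.insIdx y) + P.x (P.insIdx y + 1)) / 2) :=
    hu (P.insIdx y) (by omega) _ ⟨by linarith, by linarith⟩
  unfold stepInt
  rw [hpt, hiv, hc, hc1, hc2]
  unfold muPt muIoo
  ring

end RDSPartition

/-- Refinement: if `P.pts ⊆ Q.pts` then step functions on `P` are step on `Q`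
with the same step integral. -/
lemma refine_aux (d : ℕ) : ∀ (P Q : RDSPartition a b), Q.pts.card = P.pts.card + d →
    P.pts ⊆ Q.pts → IsStepOn a b u P →
    IsStepOn a b u Q ∧ stepInt a b α Q u = stepInt a b α P u := by
  induction d with
  | zero =>
    intro P Q hcard hsub hu
    have heq : P.pts = Q.pts := Finset.eq_of_subset_of_card_le hsub (by omega)
    obtain ⟨hn, hx⟩ := RDSPartition.canon heq
    exact ⟨isStepOn_congr hn hx hu, (stepInt_congr hn hx).symm⟩
  | succ d ih =>
    intro P Q hcard hsub hu
    have hne : P.pts ≠ Q.pts := fun h => by rw [h] at hcard; omega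
    obtain ⟨y, hyQ, hyP⟩ := Finset.exists_of_ssubset (ssubset_of_subset_of_ne hsub hne)
    have hy : y ∈ Set.Ioo a b := by
      have hmem := Q.pts_subset hyQ
      have hya : y ≠ a := fun h => hyP (h ▸ P.a_mem_pts)
      have hyb : y ≠ b := fun h => hyP (h ▸ P.b_mem_pts)
      exact ⟨lt_of_le_of_ne hmem.1 (Ne.symm hya), lt_of_le_of_ne hmem.2 hyb⟩
    set P' := P.insertPt y hy hyP with hP'
    have hpts : P'.pts = insert y P.pts := P.insertPt_pts hy hyP
    have hsub' : P'.pts ⊆ Q.pts := by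
      rw [hpts]
      exact Finset.insert_subset hyQ hsub
    have hcard' : Q.pts.card = P'.pts.card + d := by
      rw [hpts, Finset.card_insert_of_notMem hyP]
      omega
    have hstep' := P.insertPt_isStepOn hy hyP hu
    obtain ⟨h1, h2⟩ := ih P' Q hcard' hsub' hstep'
    exact ⟨h1, by rw [h2, P.insertPt_stepInt hy hyP hu]⟩

lemma refine (P Q : RDSPartition a b) (hsub : P.pts ⊆ Q.pts) (hu : IsStepOn a b u P) :
    IsStepOn a b u Q ∧ stepInt a b α Q u = stepInt a b α P u := by
  have hcard : Q.pts.card = P.pts.card + (Q.pts.card - P.pts.card) := by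
    have := Finset.card_le_card hsub
    omega
  exact refine_aux (Q.pts.card - P.pts.card) P Q hcard hsub hu

/-- Common refinement of two partitions. -/
lemma exists_refinement_finset (S : Finset ℝ) (hS : (S : Set ℝ) ⊆ Set.Icc a b)
    (P : RDSPartition a b) : ∃ R : RDSPartition a b, P.pts ⊆ R.pts ∧ S ⊆ R.pts := by
  classical
  induction S using Finset.induction with
  | empty => exact ⟨P, le_refl _, Finset.empty_subset _⟩
  | insert y T hnotmem hT =>
    obtain ⟨R, hPR, hTR⟩ := hT (fun t ht => hS (by simp [ht]))
    by_cases hyR : y ∈ R.pts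
    · exact ⟨R, hPR, Finset.insert_subset hyR hTR⟩
    · have hy : y ∈ Set.Ioo a b := by
        have hmem : y ∈ Set.Icc a b := hS (by simp)
        have hya : y ≠ a := fun h => hyR (h ▸ R.a_mem_pts)
        have hyb : y ≠ b := fun h => hyR (h ▸ R.b_mem_pts)
        exact ⟨lt_of_le_of_ne hmem.1 (Ne.symm hya), lt_of_le_of_ne hmem.2 hyb⟩
      refine ⟨R.insertPt y hy hyR, ?_, ?_⟩
      · rw [R.insertPt_pts hy hyR]
        exact hPR.trans (Finset.subset_insert _ _)
      · rw [R.insertPt_pts hy hyR]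
        exact Finset.insert_subset_insert _ hTR

lemma exists_common_refinement (P Q : RDSPartition a b) :
    ∃ R : RDSPartition a b, P.pts ⊆ R.pts ∧ Q.pts ⊆ R.pts :=
  exists_refinement_finset Q.pts Q.pts_subset P

end RefineLemmas
noncomputable section ConcatLemmas
open Function

variable {a m b : ℝ} {u α : ℝ → ℝ}

lemma rLim_cut {m b t : ℝ} (hmb : m ≤ b) (ht : t < m) : rLim m α t = rLim b α t := by
  unfold rLim
  rw [if_pos ht, if_pos (lt_of_lt_of_le ht hmb)]

lemma lLim_cut {a m t : ℝ} (ham : a ≤ m) (ht : m < t) : lLim m α t = lLim a α t := by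
  unfold lLim
  rw [if_pos ht, if_pos (lt_of_le_of_lt ham ht)]

lemma sum_concat_pt {H : ℕ → ℝ} (n₁ n₂ : ℕ) :
    ∑ i ∈ Finset.range (n₁ + n₂ + 1), H i =
      (∑ i ∈ Finset.range (n₁ + 1), H i) + (∑ j ∈ Finset.range (n₂ + 1), H (n₁ + j)) - H n₁ := by
  have split1 : ∑ i ∈ Finset.range (n₁ + n₂ + 1), H i =
      (∑ i ∈ Finset.range n₁, H i) + ∑ i ∈ Finset.Ico n₁ (n₁ + n₂ + 1), H i := by
    rw [Finset.range_eq_Ico, ← Finset.sum_Ico_consecutive _ (by omega : 0 ≤ n₁) (by omega),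
      ← Finset.range_eq_Ico]
  have shift : ∑ i ∈ Finset.Ico n₁ (n₁ + n₂ + 1), H i =
      ∑ j ∈ Finset.range (n₂ + 1), H (n₁ + j) := by
    rw [Finset.sum_Ico_eq_sum_range]
    have e : n₁ + n₂ + 1 - n₁ = n₂ + 1 := by omega
    rw [e]
  have last : ∑ i ∈ Finset.range (n₁ + 1), H i = (∑ i ∈ Finset.range n₁, H i) + H n₁ :=
    Finset.sum_range_succ H n₁
  linarith

lemma sum_concat_iv {H : ℕ → ℝ} (n₁ n₂ : ℕ) :
    ∑ i ∈ Finset.range (n₁ + n₂), H i =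
      (∑ i ∈ Finset.range n₁, H i) + ∑ j ∈ Finset.range n₂, H (n₁ + j) := by
  have split1 : ∑ i ∈ Finset.range (n₁ + n₂), H i =
      (∑ i ∈ Finset.range n₁, H i) + ∑ i ∈ Finset.Ico n₁ (n₁ + n₂), H i := by
    rw [Finset.range_eq_Ico, ← Finset.sum_Ico_consecutive _ (by omega : 0 ≤ n₁) (by omega),
      ← Finset.range_eq_Ico]
  have shift : ∑ i ∈ Finset.Ico n₁ (n₁ + n₂), H i =
      ∑ j ∈ Finset.range n₂, H (n₁ + j) := by
    rw [Finset.sum_Ico_eq_sum_range]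
    have e : n₁ + n₂ - n₁ = n₂ := by omega
    rw [e]
  linarith

namespace RDSPartition

/-- Concatenation of partitions of `[a,m]` and `[m,b]`. -/
def concat (P₁ : RDSPartition a m) (P₂ : RDSPartition m b) : RDSPartition a b where
  n := P₁.n + P₂.n
  x := fun i => if i ≤ P₁.n then P₁.x i else P₂.x (i - P₁.n)
  mono := by
    intro i hi
    rcases Nat.lt_or_ge (i + 1) (P₁.n + 1) with h | h
    · rw [if_pos (by omega : i ≤ P₁.n), if_pos (by omega : i + 1 ≤ P₁.n)]
      exact P₁.mono i (by omega)
    · have h2 : ¬ i + 1 ≤ P₁.n := by omega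
      rw [if_neg h2]
      rcases Nat.eq_or_lt_of_le (by omega : P₁.n ≤ i) with h' | h'
      · rw [if_pos (by omega : i ≤ P₁.n)]
        have e1 : i + 1 - P₁.n = 1 := by omega
        have h01 : P₂.x 0 < P₂.x 1 := P₂.mono 0 (by omega)
        rw [P₂.first] at h01
        have hxi : P₁.x i = m := by rw [← h']; exact P₁.last
        rw [e1, hxi]
        exact h01
      · rw [if_neg (by omega : ¬ i ≤ P₁.n)]
        have e : i + 1 - P₁.n = (i - P₁.n) + 1 := by omega
        rw [e]
        exact P₂.mono (i - P₁.n) (by omega)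
  first := by simp [P₁.first]
  last := by
    by_cases h : P₁.n + P₂.n ≤ P₁.n
    · rw [if_pos h]
      have e : P₂.n = 0 := by omega
      have hb := P₂.last
      rw [e] at hb
      have e2 : P₁.n + P₂.n = P₁.n := by omega
      rw [e2, P₁.last]
      exact P₂.first.symm.trans hb
    · rw [if_neg h]
      have e : P₁.n + P₂.n - P₁.n = P₂.n := by omega
      rw [e, P₂.last]

variable (P₁ : RDSPartition a m) (P₂ : RDSPartition m b)

lemma concat_n : (concat P₁ P₂).n = P₁.n + P₂.n := rfl

lemma concat_x_le {i : ℕ} (hi : i ≤ P₁.n) : (concat P₁ P₂).x i = P₁.x i := if_pos hi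

lemma concat_x_ge {i : ℕ} (hi : P₁.n ≤ i) : (concat P₁ P₂).x i = P₂.x (i - P₁.n) := by
  show (if i ≤ P₁.n then P₁.x i else P₂.x (i - P₁.n)) = P₂.x (i - P₁.n)
  rcases Nat.eq_or_lt_of_le hi with h | h
  · rw [if_pos (by omega : i ≤ P₁.n), ← h, P₁.last]
    have e : i - P₁.n = 0 := by omega
    rw [← h] at e
    rw [e, P₂.first]
  · rw [if_neg (by omega)]

lemma concat_isStepOn (h₁ : IsStepOn a m u P₁) (h₂ : IsStepOn m b u P₂) :
    IsStepOn a b u (concat P₁ P₂) := by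
  intro i hi s hs
  rw [concat_n] at hi
  rcases Nat.lt_or_ge i P₁.n with h | h
  · rw [concat_x_le P₁ P₂ (by omega), concat_x_le P₁ P₂ (by omega)] at hs ⊢
    exact h₁ i h s hs
  · rw [concat_x_ge P₁ P₂ (by omega), concat_x_ge P₁ P₂ (by omega)] at hs ⊢
    have e : i + 1 - P₁.n = (i - P₁.n) + 1 := by omega
    rw [e] at hs ⊢
    exact h₂ (i - P₁.n) (by omega) s hs

lemma concat_stepInt (hm : m ∈ Set.Ioo a b) :
    stepInt a b α (concat P₁ P₂) u = stepInt a m α P₁ u + stepInt m b α P₂ u := by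
  have ham : a < m := hm.1
  have hmb : m < b := hm.2
  have hxm : ∀ i < P₁.n, P₁.x i < m := by
    intro i hi
    have := P₁.x_lt_x (i := i) (j := P₁.n) hi le_rfl
    rwa [P₁.last] at this
  have hmx : ∀ j, 0 < j → j ≤ P₂.n → m < P₂.x j := by
    intro j h0 hj
    have := P₂.x_lt_x (i := 0) (j := j) h0 hj
    rwa [P₂.first] at this
  have hcm : (concat P₁ P₂).x P₁.n = m := by
    rw [concat_x_le P₁ P₂ le_rfl, P₁.last]
  unfold stepInt
  rw [concat_n]
  have hsp := sum_concat_pt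
    (H := fun i => u ((concat P₁ P₂).x i) * muPt a b α ((concat P₁ P₂).x i)) P₁.n P₂.n
  try dsimp only at hsp
  have hsi := sum_concat_iv
    (H := fun i => u (((concat P₁ P₂).x i + (concat P₁ P₂).x (i + 1)) / 2) *
      muIoo a b α ((concat P₁ P₂).x i) ((concat P₁ P₂).x (i + 1))) P₁.n P₂.n
  try dsimp only at hsi
  -- left point sums
  have hA : ∑ i ∈ Finset.range (P₁.n + 1),
        u ((concat P₁ P₂).x i) * muPt a b α ((concat P₁ P₂).x i) =
      (∑ i ∈ Finset.range (P₁.n + 1), u (P₁.x i) * muPt a m α (P₁.x i))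
        - u m * muPt a m α m + u m * muPt a b α m := by
    rw [Finset.sum_range_succ, Finset.sum_range_succ]
    have e1 : ∀ i ∈ Finset.range P₁.n,
        u ((concat P₁ P₂).x i) * muPt a b α ((concat P₁ P₂).x i) =
        u (P₁.x i) * muPt a m α (P₁.x i) := by
      intro i hi
      simp only [Finset.mem_range] at hi
      rw [concat_x_le P₁ P₂ (by omega)]
      unfold muPt
      rw [rLim_cut hmb.le (hxm i hi)]
    rw [Finset.sum_congr rfl e1, hcm, P₁.last]
    ring
  -- right point sums
  have hB : ∑ j ∈ Finset.range (P₂.n + 1),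
        u ((concat P₁ P₂).x (P₁.n + j)) * muPt a b α ((concat P₁ P₂).x (P₁.n + j)) =
      (∑ j ∈ Finset.range (P₂.n + 1), u (P₂.x j) * muPt m b α (P₂.x j))
        - u m * muPt m b α m + u m * muPt a b α m := by
    rw [Finset.sum_range_succ'
      (fun j => u ((concat P₁ P₂).x (P₁.n + j)) * muPt a b α ((concat P₁ P₂).x (P₁.n + j))) P₂.n]
    rw [Finset.sum_range_succ' (fun j => u (P₂.x j) * muPt m b α (P₂.x j)) P₂.n]
    have e1 : ∀ j ∈ Finset.range P₂.n,
        u ((concat P₁ P₂).x (P₁.n + (j + 1))) * muPt a b α ((concat P₁ P₂).x (P₁.n + (j + 1))) =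
        u (P₂.x (j + 1)) * muPt m b α (P₂.x (j + 1)) := by
      intro j hj
      simp only [Finset.mem_range] at hj
      rw [concat_x_ge P₁ P₂ (by omega)]
      have e : P₁.n + (j + 1) - P₁.n = j + 1 := by omega
      rw [e]
      unfold muPt
      rw [lLim_cut ham.le (hmx (j + 1) (by omega) (by omega))]
    have e0 : (concat P₁ P₂).x (P₁.n + 0) = m := by
      have e : P₁.n + 0 = P₁.n := by omega
      rw [e, hcm]
    rw [Finset.sum_congr rfl e1, e0, P₂.first]
    ring
  -- left interval sums
  have hC : ∑ i ∈ Finset.range P₁.n,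
        u (((concat P₁ P₂).x i + (concat P₁ P₂).x (i + 1)) / 2) *
          muIoo a b α ((concat P₁ P₂).x i) ((concat P₁ P₂).x (i + 1)) =
      ∑ i ∈ Finset.range P₁.n,
        u ((P₁.x i + P₁.x (i + 1)) / 2) * muIoo a m α (P₁.x i) (P₁.x (i + 1)) := by
    apply Finset.sum_congr rfl
    intro i hi
    simp only [Finset.mem_range] at hi
    rw [concat_x_le P₁ P₂ (by omega), concat_x_le P₁ P₂ (by omega)]
    unfold muIoo
    rw [rLim_cut hmb.le (hxm i hi)]
  -- right interval sums
  have hD : ∑ j ∈ Finset.range P₂.n,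
        u (((concat P₁ P₂).x (P₁.n + j) + (concat P₁ P₂).x (P₁.n + j + 1)) / 2) *
          muIoo a b α ((concat P₁ P₂).x (P₁.n + j)) ((concat P₁ P₂).x (P₁.n + j + 1)) =
      ∑ j ∈ Finset.range P₂.n,
        u ((P₂.x j + P₂.x (j + 1)) / 2) * muIoo m b α (P₂.x j) (P₂.x (j + 1)) := by
    apply Finset.sum_congr rfl
    intro j hj
    simp only [Finset.mem_range] at hj
    rw [concat_x_ge P₁ P₂ (by omega), concat_x_ge P₁ P₂ (by omega)]
    have e : P₁.n + j - P₁.n = j := by omega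
    have e' : P₁.n + j + 1 - P₁.n = j + 1 := by omega
    rw [e, e']
    unfold muIoo
    rw [lLim_cut ham.le (hmx (j + 1) (by omega) (by omega))]
  rw [hcm] at hsp
  rw [hsp, hsi, hA, hB, hC, hD]
  have hmu : muPt a b α m = muPt a m α m + muPt m b α m := by
    unfold muPt
    rw [rLim_self, lLim_self]
    ring
  rw [hmu]
  ring

/-- Splitting a partition containing `m` into partitions of `[a,m]` and `[m,b]`. -/
lemma exists_split (hm : m ∈ Set.Ioo a b) (P : RDSPartition a b) (hmem : m ∈ P.pts)
    (hu : IsStepOn a b u P) :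
    ∃ (P₁ : RDSPartition a m) (P₂ : RDSPartition m b), IsStepOn a m u P₁ ∧ IsStepOn m b u P₂ ∧
      stepInt a b α P u = stepInt a m α P₁ u + stepInt m b α P₂ u := by
  obtain ⟨k, hk, hxk⟩ := P.mem_pts.1 hmem
  have hk0 : 0 < k := by
    rcases Nat.eq_zero_or_pos k with h | h
    · exfalso
      rw [h, P.first] at hxk
      exact absurd hxk (ne_of_lt hm.1)
    · exact h
  have hkn : k < P.n := by
    rcases Nat.lt_or_ge k P.n with h | h
    · exact h
    · exfalso
      have : k = P.n := by omega
      rw [this, P.last] at hxk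
      exact absurd hxk (ne_of_gt hm.2)
  have hmono1 : ∀ i, i < k → P.x i < P.x (i + 1) := fun i hi => P.mono i (by omega)
  have hmono2 : ∀ i, i < P.n - k → P.x (i + k) < P.x (i + 1 + k) := by
    intro i hi
    have e : i + 1 + k = (i + k) + 1 := by omega
    rw [e]
    exact P.mono (i + k) (by omega)
  have hfirst2 : P.x (0 + k) = m := by rw [Nat.zero_add]; exact hxk
  have hlast2 : P.x (P.n - k + k) = b := by
    have e : P.n - k + k = P.n := by omega
    rw [e]; exact P.last
  set P₁ : RDSPartition a m := ⟨k, P.x, hmono1, P.first, hxk⟩ with hP₁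
  set P₂ : RDSPartition m b := ⟨P.n - k, fun i => P.x (i + k), hmono2, hfirst2, hlast2⟩ with hP₂
  have hP₁n : P₁.n = k := rfl
  have hP₁x : ∀ i, P₁.x i = P.x i := fun _ => rfl
  have hP₂n : P₂.n = P.n - k := rfl
  have hP₂x : ∀ i, P₂.x i = P.x (i + k) := fun _ => rfl
  refine ⟨P₁, P₂, ?_, ?_, ?_⟩
  · intro i hi s hs
    rw [hP₁n] at hi
    rw [hP₁x i, hP₁x (i + 1)] at hs ⊢
    exact hu i (by omega) s hs
  · intro i hi s hs
    rw [hP₂n] at hi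
    rw [hP₂x i, hP₂x (i + 1)] at hs ⊢
    have e : i + 1 + k = (i + k) + 1 := by omega
    rw [e] at hs ⊢
    exact hu (i + k) (by omega) s hs
  · have hn : P.n = (concat P₁ P₂).n := by
      rw [concat_n, hP₁n, hP₂n]
      omega
    have hx : ∀ i, i ≤ P.n → P.x i = (concat P₁ P₂).x i := by
      intro i hi
      rcases le_or_gt i k with h | h
      · rw [concat_x_le P₁ P₂ (by rw [hP₁n]; exact h), hP₁x]
      · rw [concat_x_ge P₁ P₂ (by rw [hP₁n]; omega), hP₂x, hP₁n]
        congr 1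
        omega
    rw [stepInt_congr (g := α) (u := u) hn hx, concat_stepInt P₁ P₂ hm]

end RDSPartition

end ConcatLemmas
noncomputable section EnvelopeA
open Function Set

variable {a b m : ℝ} {g h f : ℝ → ℝ}

lemma BddOn.mono {a' b' : ℝ} (hf : BddOn a' b' f) (hs : Set.Icc a b ⊆ Set.Icc a' b') :
    BddOn a b f := by
  obtain ⟨M, hM⟩ := hf
  exact ⟨M, fun t ht => hM t (hs ht)⟩

lemma uset_nonempty (hab : a < b) (hf : BddOn a b f) :
    { r | ∃ (u : ℝ → ℝ) (P : RDSPartition a b), IsStepOn a b u P ∧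
      (∀ t ∈ Set.Icc a b, f t ≤ u t) ∧ r = stepInt a b g P u }.Nonempty := by
  obtain ⟨M, hM⟩ := hf
  exact ⟨_, fun _ => M, RDSPartition.trivial hab, isStepOn_const M _,
    fun t ht => (abs_le.1 (hM t ht)).2, rfl⟩

lemma lset_nonempty (hab : a < b) (hf : BddOn a b f) :
    { r | ∃ (v : ℝ → ℝ) (P : RDSPartition a b), IsStepOn a b v P ∧
      (∀ t ∈ Set.Icc a b, v t ≤ f t) ∧ r = stepInt a b g P v }.Nonempty := by
  obtain ⟨M, hM⟩ := hf
  exact ⟨_, fun _ => -M, RDSPartition.trivial hab, isStepOn_const (-M) _,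
    fun t ht => neg_le_of_abs_le (hM t ht), rfl⟩

lemma uset_bddBelow (hg : Monotone g) (hf : BddOn a b f) :
    BddBelow { r | ∃ (u : ℝ → ℝ) (P : RDSPartition a b), IsStepOn a b u P ∧
      (∀ t ∈ Set.Icc a b, f t ≤ u t) ∧ r = stepInt a b g P u } := by
  obtain ⟨M, hM⟩ := hf
  refine ⟨(-M) * (g b - g a), ?_⟩
  rintro r ⟨u, P, hstep, hub, rfl⟩
  calc (-M) * (g b - g a) = stepInt a b g P (fun _ => -M) := (stepInt_const P (-M)).symm
    _ ≤ stepInt a b g P u := stepInt_mono_u hg P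
        (fun t ht => le_trans (neg_le_of_abs_le (hM t ht)) (hub t ht))

lemma lset_bddAbove (hg : Monotone g) (hf : BddOn a b f) :
    BddAbove { r | ∃ (v : ℝ → ℝ) (P : RDSPartition a b), IsStepOn a b v P ∧
      (∀ t ∈ Set.Icc a b, v t ≤ f t) ∧ r = stepInt a b g P v } := by
  obtain ⟨M, hM⟩ := hf
  refine ⟨M * (g b - g a), ?_⟩
  rintro r ⟨v, P, hstep, hlb, rfl⟩
  calc stepInt a b g P v ≤ stepInt a b g P (fun _ => M) := stepInt_mono_u hg P
        (fun t ht => le_trans (hlb t ht) (abs_le.1 (hM t ht)).2)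
    _ = M * (g b - g a) := stepInt_const P M

lemma step_pair_le (hg : Monotone g) {v u : ℝ → ℝ} {Pv Pu : RDSPartition a b}
    (hv : IsStepOn a b v Pv) (hu : IsStepOn a b u Pu)
    (hvf : ∀ t ∈ Set.Icc a b, v t ≤ f t) (hfu : ∀ t ∈ Set.Icc a b, f t ≤ u t) :
    stepInt a b g Pv v ≤ stepInt a b g Pu u := by
  obtain ⟨R, hPvR, hPuR⟩ := exists_common_refinement Pv Pu
  obtain ⟨hvR, hveq⟩ := refine (α := g) Pv R hPvR hv
  obtain ⟨huR, hueq⟩ := refine (α := g) Pu R hPuR hu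
  rw [← hveq, ← hueq]
  exact stepInt_mono_u hg R (fun t ht => le_trans (hvf t ht) (hfu t ht))

lemma lower_le_upper (hg : Monotone g) (hab : a < b) (hf : BddOn a b f) :
    lowerRDS a b g f ≤ upperRDS a b g f := by
  apply csSup_le (lset_nonempty hab hf)
  rintro l ⟨v, Pv, hv, hvf, rfl⟩
  apply le_csInf (uset_nonempty hab hf)
  rintro r ⟨u, Pu, hu, hfu, rfl⟩
  exact step_pair_le hg hv hu hvf hfu

/-- Envelopes only depend on the integrator's values on `[a', b'] ⊇ [a, b]`. -/
lemma envelope_congr {a' b' : ℝ} (hg : Monotone g) (heq : Set.EqOn h g (Set.Icc a' b'))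
    (ha : a' ≤ a) (hb : b ≤ b') :
    upperRDS a b h f = upperRDS a b g f ∧ lowerRDS a b h f = lowerRDS a b g f := by
  constructor
  · unfold upperRDS
    congr 1
    ext r
    constructor
    · rintro ⟨u, P, h1, h2, rfl⟩
      exact ⟨u, P, h1, h2, stepInt_congr_integrator hg heq ha hb P⟩
    · rintro ⟨u, P, h1, h2, rfl⟩
      exact ⟨u, P, h1, h2, (stepInt_congr_integrator hg heq ha hb P).symm⟩
  · unfold lowerRDS
    congr 1
    ext r
    constructor
    · rintro ⟨u, P, h1, h2, rfl⟩
      exact ⟨u, P, h1, h2, stepInt_congr_integrator hg heq ha hb P⟩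
    · rintro ⟨u, P, h1, h2, rfl⟩
      exact ⟨u, P, h1, h2, (stepInt_congr_integrator hg heq ha hb P).symm⟩

end EnvelopeA
noncomputable section EnvelopeSplit
open Function Set

variable {a b m : ℝ} {g f u₁ u₂ : ℝ → ℝ}

/-- The set defining the upper envelope. -/
def uSet (a b : ℝ) (g f : ℝ → ℝ) : Set ℝ :=
  { r | ∃ (u : ℝ → ℝ) (P : RDSPartition a b), IsStepOn a b u P ∧
    (∀ t ∈ Set.Icc a b, f t ≤ u t) ∧ r = stepInt a b g P u }

/-- The set defining the lower envelope. -/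
def lSet (a b : ℝ) (g f : ℝ → ℝ) : Set ℝ :=
  { r | ∃ (v : ℝ → ℝ) (P : RDSPartition a b), IsStepOn a b v P ∧
    (∀ t ∈ Set.Icc a b, v t ≤ f t) ∧ r = stepInt a b g P v }

lemma upperRDS_def : upperRDS a b g f = sInf (uSet a b g f) := rfl
lemma lowerRDS_def : lowerRDS a b g f = sSup (lSet a b g f) := rfl

def glueMin (m : ℝ) (u₁ u₂ : ℝ → ℝ) : ℝ → ℝ :=
  fun t => if t < m then u₁ t else if m < t then u₂ t else min (u₁ m) (u₂ m)

def glueMax (m : ℝ) (u₁ u₂ : ℝ → ℝ) : ℝ → ℝ :=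
  fun t => if t < m then u₁ t else if m < t then u₂ t else max (u₁ m) (u₂ m)

lemma glueMin_lt {t : ℝ} (h : t < m) : glueMin m u₁ u₂ t = u₁ t := if_pos h
lemma glueMin_gt {t : ℝ} (h : m < t) : glueMin m u₁ u₂ t = u₂ t := by
  unfold glueMin; rw [if_neg (by linarith), if_pos h]
lemma glueMin_eq : glueMin m u₁ u₂ m = min (u₁ m) (u₂ m) := by
  unfold glueMin; rw [if_neg (lt_irrefl m), if_neg (lt_irrefl m)]
lemma glueMax_lt {t : ℝ} (h : t < m) : glueMax m u₁ u₂ t = u₁ t := if_pos h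
lemma glueMax_gt {t : ℝ} (h : m < t) : glueMax m u₁ u₂ t = u₂ t := by
  unfold glueMax; rw [if_neg (by linarith), if_pos h]
lemma glueMax_eq : glueMax m u₁ u₂ m = max (u₁ m) (u₂ m) := by
  unfold glueMax; rw [if_neg (lt_irrefl m), if_neg (lt_irrefl m)]

lemma glueMin_isStepOn_left (P₁ : RDSPartition a m) (h₁ : IsStepOn a m u₁ P₁) :
    IsStepOn a m (glueMin m u₁ u₂) P₁ := by
  intro i hi s hs
  have hxle : P₁.x (i + 1) ≤ m := (P₁.x_mem (by omega)).2
  have hsm : s < m := lt_of_lt_of_le hs.2 hxle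
  have hx : P₁.x i < P₁.x (i + 1) := P₁.mono i hi
  have hmidm : (P₁.x i + P₁.x (i + 1)) / 2 < m := by
    have : (P₁.x i + P₁.x (i + 1)) / 2 < P₁.x (i + 1) := by linarith
    linarith
  rw [glueMin_lt hsm, glueMin_lt hmidm]
  exact h₁ i hi s hs

lemma glueMin_isStepOn_right {b : ℝ} (P₂ : RDSPartition m b) (h₂ : IsStepOn m b u₂ P₂) :
    IsStepOn m b (glueMin m u₁ u₂) P₂ := by
  intro i hi s hs
  have hxge : m ≤ P₂.x i := (P₂.x_mem (by omega)).1
  have hsm : m < s := lt_of_le_of_lt hxge hs.1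
  have hx : P₂.x i < P₂.x (i + 1) := P₂.mono i hi
  have hmidm : m < (P₂.x i + P₂.x (i + 1)) / 2 := by
    have : P₂.x i < (P₂.x i + P₂.x (i + 1)) / 2 := by linarith
    linarith
  rw [glueMin_gt hsm, glueMin_gt hmidm]
  exact h₂ i hi s hs

lemma glueMax_isStepOn_left (P₁ : RDSPartition a m) (h₁ : IsStepOn a m u₁ P₁) :
    IsStepOn a m (glueMax m u₁ u₂) P₁ := by
  intro i hi s hs
  have hxle : P₁.x (i + 1) ≤ m := (P₁.x_mem (by omega)).2
  have hsm : s < m := lt_of_lt_of_le hs.2 hxle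
  have hx : P₁.x i < P₁.x (i + 1) := P₁.mono i hi
  have hmidm : (P₁.x i + P₁.x (i + 1)) / 2 < m := by
    have : (P₁.x i + P₁.x (i + 1)) / 2 < P₁.x (i + 1) := by linarith
    linarith
  rw [glueMax_lt hsm, glueMax_lt hmidm]
  exact h₁ i hi s hs

lemma glueMax_isStepOn_right {b : ℝ} (P₂ : RDSPartition m b) (h₂ : IsStepOn m b u₂ P₂) :
    IsStepOn m b (glueMax m u₁ u₂) P₂ := by
  intro i hi s hs
  have hxge : m ≤ P₂.x i := (P₂.x_mem (by omega)).1
  have hsm : m < s := lt_of_le_of_lt hxge hs.1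
  have hx : P₂.x i < P₂.x (i + 1) := P₂.mono i hi
  have hmidm : m < (P₂.x i + P₂.x (i + 1)) / 2 := by
    have : P₂.x i < (P₂.x i + P₂.x (i + 1)) / 2 := by linarith
    linarith
  rw [glueMax_gt hsm, glueMax_gt hmidm]
  exact h₂ i hi s hs

lemma upper_split (hg : Monotone g) (hm : m ∈ Set.Ioo a b) (hf : BddOn a b f) :
    upperRDS a b g f = upperRDS a m g f + upperRDS m b g f := by
  have hab : a < b := lt_trans hm.1 hm.2
  have hf1 : BddOn a m f := hf.mono (Icc_subset_Icc le_rfl hm.2.le)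
  have hf2 : BddOn m b f := hf.mono (Icc_subset_Icc hm.1.le le_rfl)
  apply le_antisymm
  · have key : ∀ r₁ ∈ uSet a m g f, ∀ r₂ ∈ uSet m b g f,
        upperRDS a b g f ≤ r₁ + r₂ := by
      rintro r₁ ⟨u₁, P₁, h₁, hfu₁, rfl⟩ r₂ ⟨u₂, P₂, h₂, hfu₂, rfl⟩
      have hfuu : ∀ t ∈ Set.Icc a b, f t ≤ glueMin m u₁ u₂ t := by
        intro t ht
        rcases lt_trichotomy t m with h | h | h
        · rw [glueMin_lt h]; exact hfu₁ t ⟨ht.1, h.le⟩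
        · subst h
          rw [glueMin_eq]
          exact le_min (hfu₁ t ⟨ht.1, le_rfl⟩) (hfu₂ t ⟨le_rfl, ht.2⟩)
        · rw [glueMin_gt h]; exact hfu₂ t ⟨h.le, ht.2⟩
      have hle1 : ∀ t ∈ Set.Icc a m, glueMin m u₁ u₂ t ≤ u₁ t := by
        intro t ht
        rcases lt_or_eq_of_le ht.2 with h | h
        · rw [glueMin_lt h]
        · subst h
          rw [glueMin_eq]; exact min_le_left _ _
      have hle2 : ∀ t ∈ Set.Icc m b, glueMin m u₁ u₂ t ≤ u₂ t := by
        intro t ht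
        rcases lt_or_eq_of_le ht.1 with h | h
        · rw [glueMin_gt h]
        · rw [← h, glueMin_eq]; exact min_le_right _ _
      have hmem : stepInt a b g (P₁.concat P₂) (glueMin m u₁ u₂) ∈ uSet a b g f :=
        ⟨glueMin m u₁ u₂, P₁.concat P₂,
          RDSPartition.concat_isStepOn P₁ P₂ (glueMin_isStepOn_left P₁ h₁)
            (glueMin_isStepOn_right P₂ h₂), hfuu, rfl⟩
      calc upperRDS a b g f ≤ stepInt a b g (P₁.concat P₂) (glueMin m u₁ u₂) :=
            csInf_le (uset_bddBelow hg hf) hmem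
        _ ≤ stepInt a m g P₁ u₁ + stepInt m b g P₂ u₂ := by
            rw [RDSPartition.concat_stepInt P₁ P₂ hm]
            exact add_le_add (stepInt_mono_u hg P₁ hle1) (stepInt_mono_u hg P₂ hle2)
    have h2 : ∀ r₁ ∈ uSet a m g f, upperRDS a b g f - r₁ ≤ upperRDS m b g f := by
      intro r₁ h₁
      apply le_csInf (uset_nonempty hm.2 hf2)
      intro r₂ h₂
      have := key r₁ h₁ r₂ h₂
      linarith
    have h3 : upperRDS a b g f - upperRDS m b g f ≤ upperRDS a m g f := by
      apply le_csInf (uset_nonempty hm.1 hf1)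
      intro r₁ h₁
      have := h2 r₁ h₁
      linarith
    linarith
  · apply le_csInf (uset_nonempty hab hf)
    rintro r ⟨u, P, hstep, hfu, rfl⟩
    obtain ⟨R, hPR, hmR⟩ := exists_refinement_finset {m}
      (by intro t ht
          simp only [Finset.coe_singleton, Set.mem_singleton_iff] at ht
          subst ht
          exact ⟨hm.1.le, hm.2.le⟩) P
    obtain ⟨hstepR, heqR⟩ := refine (α := g) P R hPR hstep
    obtain ⟨P₁, P₂, h₁, h₂, hsum⟩ := RDSPartition.exists_split (α := g) hm R
      (hmR (Finset.mem_singleton_self m)) hstepR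
    rw [← heqR, hsum]
    have m₁ : stepInt a m g P₁ u ∈ uSet a m g f :=
      ⟨u, P₁, h₁, fun t ht => hfu t (Icc_subset_Icc le_rfl hm.2.le ht), rfl⟩
    have m₂ : stepInt m b g P₂ u ∈ uSet m b g f :=
      ⟨u, P₂, h₂, fun t ht => hfu t (Icc_subset_Icc hm.1.le le_rfl ht), rfl⟩
    exact add_le_add (csInf_le (uset_bddBelow hg hf1) m₁) (csInf_le (uset_bddBelow hg hf2) m₂)

lemma lower_split (hg : Monotone g) (hm : m ∈ Set.Ioo a b) (hf : BddOn a b f) :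
    lowerRDS a b g f = lowerRDS a m g f + lowerRDS m b g f := by
  have hab : a < b := lt_trans hm.1 hm.2
  have hf1 : BddOn a m f := hf.mono (Icc_subset_Icc le_rfl hm.2.le)
  have hf2 : BddOn m b f := hf.mono (Icc_subset_Icc hm.1.le le_rfl)
  apply le_antisymm
  · apply csSup_le (lset_nonempty hab hf)
    rintro r ⟨v, P, hstep, hvf, rfl⟩
    obtain ⟨R, hPR, hmR⟩ := exists_refinement_finset {m}
      (by intro t ht
          simp only [Finset.coe_singleton, Set.mem_singleton_iff] at ht
          subst ht
          exact ⟨hm.1.le, hm.2.le⟩) P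
    obtain ⟨hstepR, heqR⟩ := refine (α := g) P R hPR hstep
    obtain ⟨P₁, P₂, h₁, h₂, hsum⟩ := RDSPartition.exists_split (α := g) hm R
      (hmR (Finset.mem_singleton_self m)) hstepR
    rw [← heqR, hsum]
    have m₁ : stepInt a m g P₁ v ∈ lSet a m g f :=
      ⟨v, P₁, h₁, fun t ht => hvf t (Icc_subset_Icc le_rfl hm.2.le ht), rfl⟩
    have m₂ : stepInt m b g P₂ v ∈ lSet m b g f :=
      ⟨v, P₂, h₂, fun t ht => hvf t (Icc_subset_Icc hm.1.le le_rfl ht), rfl⟩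
    exact add_le_add (le_csSup (lset_bddAbove hg hf1) m₁) (le_csSup (lset_bddAbove hg hf2) m₂)
  · have key : ∀ r₁ ∈ lSet a m g f, ∀ r₂ ∈ lSet m b g f,
        r₁ + r₂ ≤ lowerRDS a b g f := by
      rintro r₁ ⟨u₁, P₁, h₁, hfu₁, rfl⟩ r₂ ⟨u₂, P₂, h₂, hfu₂, rfl⟩
      have hfuu : ∀ t ∈ Set.Icc a b, glueMax m u₁ u₂ t ≤ f t := by
        intro t ht
        rcases lt_trichotomy t m with h | h | h
        · rw [glueMax_lt h]; exact hfu₁ t ⟨ht.1, h.le⟩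
        · subst h
          rw [glueMax_eq]
          exact max_le (hfu₁ t ⟨ht.1, le_rfl⟩) (hfu₂ t ⟨le_rfl, ht.2⟩)
        · rw [glueMax_gt h]; exact hfu₂ t ⟨h.le, ht.2⟩
      have hle1 : ∀ t ∈ Set.Icc a m, u₁ t ≤ glueMax m u₁ u₂ t := by
        intro t ht
        rcases lt_or_eq_of_le ht.2 with h | h
        · rw [glueMax_lt h]
        · subst h
          rw [glueMax_eq]; exact le_max_left _ _
      have hle2 : ∀ t ∈ Set.Icc m b, u₂ t ≤ glueMax m u₁ u₂ t := by
        intro t ht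
        rcases lt_or_eq_of_le ht.1 with h | h
        · rw [glueMax_gt h]
        · rw [← h, glueMax_eq]; exact le_max_right _ _
      have hmem : stepInt a b g (P₁.concat P₂) (glueMax m u₁ u₂) ∈ lSet a b g f :=
        ⟨glueMax m u₁ u₂, P₁.concat P₂,
          RDSPartition.concat_isStepOn P₁ P₂ (glueMax_isStepOn_left P₁ h₁)
            (glueMax_isStepOn_right P₂ h₂), hfuu, rfl⟩
      calc stepInt a m g P₁ u₁ + stepInt m b g P₂ u₂
          ≤ stepInt a b g (P₁.concat P₂) (glueMax m u₁ u₂) := by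
            rw [RDSPartition.concat_stepInt P₁ P₂ hm]
            exact add_le_add (stepInt_mono_u hg P₁ hle1) (stepInt_mono_u hg P₂ hle2)
        _ ≤ lowerRDS a b g f := le_csSup (lset_bddAbove hg hf) hmem
    have h2 : ∀ r₁ ∈ lSet a m g f, lowerRDS m b g f ≤ lowerRDS a b g f - r₁ := by
      intro r₁ h₁
      apply csSup_le (lset_nonempty hm.2 hf2)
      intro r₂ h₂
      have := key r₁ h₁ r₂ h₂
      linarith
    have h3 : lowerRDS a m g f ≤ lowerRDS a b g f - lowerRDS m b g f := by
      apply csSup_le (lset_nonempty hm.1 hf1)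
      intro r₁ h₁
      have := h2 r₁ h₁
      linarith
    linarith

end EnvelopeSplit
noncomputable section EnvelopeAdd
open Function Set

variable {a b : ℝ} {g h f : ℝ → ℝ}

lemma upper_subadd (hg : Monotone g) (hh : Monotone h) (hab : a < b) (hf : BddOn a b f) :
    upperRDS a b (fun t => g t + h t) f ≤ upperRDS a b g f + upperRDS a b h f := by
  have hgh : Monotone (fun t => g t + h t) := hg.add hh
  have key : ∀ r₁ ∈ uSet a b g f, ∀ r₂ ∈ uSet a b h f,
      upperRDS a b (fun t => g t + h t) f ≤ r₁ + r₂ := by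
    rintro r₁ ⟨u₁, P₁, h₁, hfu₁, rfl⟩ r₂ ⟨u₂, P₂, h₂, hfu₂, rfl⟩
    obtain ⟨R, hP₁R, hP₂R⟩ := exists_common_refinement P₁ P₂
    obtain ⟨h₁R, heq₁⟩ := refine (α := g) P₁ R hP₁R h₁
    obtain ⟨h₂R, heq₂⟩ := refine (α := h) P₂ R hP₂R h₂
    have hstep : IsStepOn a b (fun t => min (u₁ t) (u₂ t)) R := by
      intro i hi s hs
      dsimp only
      rw [h₁R i hi s hs, h₂R i hi s hs]
    have hfuu : ∀ t ∈ Set.Icc a b, f t ≤ min (u₁ t) (u₂ t) :=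
      fun t ht => le_min (hfu₁ t ht) (hfu₂ t ht)
    have hmem : stepInt a b (fun t => g t + h t) R (fun t => min (u₁ t) (u₂ t)) ∈
        uSet a b (fun t => g t + h t) f :=
      ⟨_, R, hstep, hfuu, rfl⟩
    calc upperRDS a b (fun t => g t + h t) f
        ≤ stepInt a b (fun t => g t + h t) R (fun t => min (u₁ t) (u₂ t)) :=
          csInf_le (uset_bddBelow hgh hf) hmem
      _ = stepInt a b g R (fun t => min (u₁ t) (u₂ t)) +
            stepInt a b h R (fun t => min (u₁ t) (u₂ t)) :=
          stepInt_add_integrator hg hh R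
      _ ≤ stepInt a b g R u₁ + stepInt a b h R u₂ :=
          add_le_add (stepInt_mono_u hg R (fun t _ => min_le_left _ _))
            (stepInt_mono_u hh R (fun t _ => min_le_right _ _))
      _ = stepInt a b g P₁ u₁ + stepInt a b h P₂ u₂ := by rw [heq₁, heq₂]
  have h2 : ∀ r₁ ∈ uSet a b g f, upperRDS a b (fun t => g t + h t) f - r₁ ≤
      upperRDS a b h f := by
    intro r₁ h₁
    apply le_csInf (uset_nonempty hab hf)
    intro r₂ h₂
    have := key r₁ h₁ r₂ h₂
    linarith
  have h3 : upperRDS a b (fun t => g t + h t) f - upperRDS a b h f ≤ upperRDS a b g f := by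
    apply le_csInf (uset_nonempty hab hf)
    intro r₁ h₁
    have := h2 r₁ h₁
    linarith
  linarith

lemma lower_superadd (hg : Monotone g) (hh : Monotone h) (hab : a < b) (hf : BddOn a b f) :
    lowerRDS a b g f + lowerRDS a b h f ≤ lowerRDS a b (fun t => g t + h t) f := by
  have hgh : Monotone (fun t => g t + h t) := hg.add hh
  have key : ∀ r₁ ∈ lSet a b g f, ∀ r₂ ∈ lSet a b h f,
      r₁ + r₂ ≤ lowerRDS a b (fun t => g t + h t) f := by
    rintro r₁ ⟨u₁, P₁, h₁, hfu₁, rfl⟩ r₂ ⟨u₂, P₂, h₂, hfu₂, rfl⟩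
    obtain ⟨R, hP₁R, hP₂R⟩ := exists_common_refinement P₁ P₂
    obtain ⟨h₁R, heq₁⟩ := refine (α := g) P₁ R hP₁R h₁
    obtain ⟨h₂R, heq₂⟩ := refine (α := h) P₂ R hP₂R h₂
    have hstep : IsStepOn a b (fun t => max (u₁ t) (u₂ t)) R := by
      intro i hi s hs
      dsimp only
      rw [h₁R i hi s hs, h₂R i hi s hs]
    have hfuu : ∀ t ∈ Set.Icc a b, max (u₁ t) (u₂ t) ≤ f t :=
      fun t ht => max_le (hfu₁ t ht) (hfu₂ t ht)
    have hmem : stepInt a b (fun t => g t + h t) R (fun t => max (u₁ t) (u₂ t)) ∈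
        lSet a b (fun t => g t + h t) f :=
      ⟨_, R, hstep, hfuu, rfl⟩
    calc stepInt a b g P₁ u₁ + stepInt a b h P₂ u₂
        = stepInt a b g R u₁ + stepInt a b h R u₂ := by rw [heq₁, heq₂]
      _ ≤ stepInt a b g R (fun t => max (u₁ t) (u₂ t)) +
            stepInt a b h R (fun t => max (u₁ t) (u₂ t)) :=
          add_le_add (stepInt_mono_u hg R (fun t _ => le_max_left _ _))
            (stepInt_mono_u hh R (fun t _ => le_max_right _ _))
      _ = stepInt a b (fun t => g t + h t) R (fun t => max (u₁ t) (u₂ t)) :=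
          (stepInt_add_integrator hg hh R).symm
      _ ≤ lowerRDS a b (fun t => g t + h t) f := le_csSup (lset_bddAbove hgh hf) hmem
  have h2 : ∀ r₁ ∈ lSet a b g f, lowerRDS a b h f ≤
      lowerRDS a b (fun t => g t + h t) f - r₁ := by
    intro r₁ h₁
    apply csSup_le (lset_nonempty hab hf)
    intro r₂ h₂
    have := key r₁ h₁ r₂ h₂
    linarith
  have h3 : lowerRDS a b g f ≤
      lowerRDS a b (fun t => g t + h t) f - lowerRDS a b h f := by
    apply csSup_le (lset_nonempty hab hf)
    intro r₁ h₁
    have := h2 r₁ h₁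
    linarith
  linarith

lemma integrableInc_add (hg : Monotone g) (hh : Monotone h) (hab : a < b) (hf : BddOn a b f)
    (i1 : RDSIntegrableInc a b g f) (i2 : RDSIntegrableInc a b h f) :
    RDSIntegrableInc a b (fun t => g t + h t) f ∧
      upperRDS a b (fun t => g t + h t) f = upperRDS a b g f + upperRDS a b h f := by
  unfold RDSIntegrableInc at i1 i2 ⊢
  have hsub := upper_subadd hg hh hab hf
  have hsup := lower_superadd hg hh hab hf
  have hle := lower_le_upper (hg.add hh) hab hf
  constructor
  · linarith
  · linarith

/-- Well-definedness: two Jordan decompositions give the same difference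
of upper envelopes. -/
lemma upper_sub_eq {gp gm hp hm : ℝ → ℝ} (hgp : Monotone gp) (hgm : Monotone gm)
    (hhp : Monotone hp) (hhm : Monotone hm) (hab : a < b) (hf : BddOn a b f)
    (hsum : ∀ t ∈ Set.Icc a b, gp t - gm t = hp t - hm t)
    (igp : RDSIntegrableInc a b gp f) (igm : RDSIntegrableInc a b gm f)
    (ihp : RDSIntegrableInc a b hp f) (ihm : RDSIntegrableInc a b hm f) :
    upperRDS a b gp f - upperRDS a b gm f = upperRDS a b hp f - upperRDS a b hm f := by
  have h1 := (integrableInc_add hgp hhm hab hf igp ihm).2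
  have h2 := (integrableInc_add hhp hgm hab hf ihp igm).2
  have h3 : upperRDS a b (fun t => gp t + hm t) f =
      upperRDS a b (fun t => hp t + gm t) f := by
    have heq : Set.EqOn (fun t => gp t + hm t) (fun t => hp t + gm t) (Set.Icc a b) := by
      intro t ht
      have := hsum t ht
      dsimp only
      linarith
    exact (envelope_congr (hhp.add hgm) heq le_rfl le_rfl).1
  linarith

/-- Clamped extension of a function monotone on `[c,d]` to a globally monotone function. -/
def clampExt (c d : ℝ) (g : ℝ → ℝ) : ℝ → ℝ := fun t => g (max c (min d t))

lemma clampExt_monotone {c d : ℝ} (hcd : c ≤ d) (hg : MonotoneOn g (Set.Icc c d)) :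
    Monotone (clampExt c d g) := by
  intro s t hst
  have hs : max c (min d s) ∈ Set.Icc c d :=
    ⟨le_max_left _ _, max_le hcd (min_le_left _ _)⟩
  have ht : max c (min d t) ∈ Set.Icc c d :=
    ⟨le_max_left _ _, max_le hcd (min_le_left _ _)⟩
  exact hg hs ht (max_le_max le_rfl (min_le_min le_rfl hst))

lemma clampExt_eqOn {c d : ℝ} : Set.EqOn g (clampExt c d g) (Set.Icc c d) := by
  intro t ht
  unfold clampExt
  rw [min_eq_right ht.2, max_eq_right ht.1]

lemma stepInt_const_integrator {c : ℝ} {u : ℝ → ℝ} (P : RDSPartition a b) :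
    stepInt a b (fun _ => c) P u = 0 := by
  have hrc : ∀ t : ℝ, rLim b (fun _ => c) t = c := by
    intro t
    unfold rLim
    split
    · exact rightLim_eq_of_tendsto tendsto_const_nhds
    · rfl
  have hlc : ∀ t : ℝ, lLim a (fun _ => c) t = c := by
    intro t
    unfold lLim
    split
    · exact leftLim_eq_of_tendsto tendsto_const_nhds
    · rfl
  unfold stepInt muPt muIoo
  simp [hrc, hlc]

lemma envelope_shift {c : ℝ} (hg : Monotone g) :
    upperRDS a b (fun t => g t + c) f = upperRDS a b g f ∧
      lowerRDS a b (fun t => g t + c) f = lowerRDS a b g f := by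
  have hkey : ∀ (P : RDSPartition a b) (u : ℝ → ℝ),
      stepInt a b (fun t => g t + c) P u = stepInt a b g P u := by
    intro P u
    rw [stepInt_add_integrator hg monotone_const P, stepInt_const_integrator P]
    ring
  constructor
  · unfold upperRDS
    congr 1
    ext r
    constructor
    · rintro ⟨u, P, h1, h2, rfl⟩
      exact ⟨u, P, h1, h2, hkey P u⟩
    · rintro ⟨u, P, h1, h2, rfl⟩
      exact ⟨u, P, h1, h2, (hkey P u).symm⟩
  · unfold lowerRDS
    congr 1
    ext r
    constructor
    · rintro ⟨u, P, h1, h2, rfl⟩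
      exact ⟨u, P, h1, h2, hkey P u⟩
    · rintro ⟨u, P, h1, h2, rfl⟩
      exact ⟨u, P, h1, h2, (hkey P u).symm⟩

end EnvelopeAdd
noncomputable section MainAssembly
open Function Set

variable {a b m c d : ℝ} {g f : ℝ → ℝ}

lemma clamp_congr {c d c' d' : ℝ} (hg : MonotoneOn g (Set.Icc c d)) (hcd : c ≤ d)
    (hc : c ≤ c') (hd : d' ≤ d) :
    upperRDS c' d' g f = upperRDS c' d' (clampExt c d g) f ∧
      lowerRDS c' d' g f = lowerRDS c' d' (clampExt c d g) f :=
  envelope_congr (clampExt_monotone hcd hg) clampExt_eqOn hc hd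

lemma incClamp (hg : MonotoneOn g (Set.Icc c d)) (hcd : c ≤ d) :
    RDSIntegrableInc c d g f ↔ RDSIntegrableInc c d (clampExt c d g) f := by
  obtain ⟨hu, hl⟩ := clamp_congr (f := f) hg hcd le_rfl le_rfl
  unfold RDSIntegrableInc
  rw [hu, hl]

lemma splitInc (hg : Monotone g) (hm : m ∈ Set.Ioo a b) (hf : BddOn a b f) :
    RDSIntegrableInc a b g f ↔ RDSIntegrableInc a m g f ∧ RDSIntegrableInc m b g f := by
  have hf1 : BddOn a m f := hf.mono (Icc_subset_Icc le_rfl hm.2.le)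
  have hf2 : BddOn m b f := hf.mono (Icc_subset_Icc hm.1.le le_rfl)
  have hu := upper_split (f := f) hg hm hf
  have hl := lower_split (f := f) hg hm hf
  have l1 := lower_le_upper (f := f) hg hm.1 hf1
  have l2 := lower_le_upper (f := f) hg hm.2 hf2
  unfold RDSIntegrableInc
  constructor
  · intro h
    constructor <;> linarith
  · rintro ⟨h1, h2⟩
    linarith

/-- The glued shifted function. -/
def glueShift (m : ℝ) (g₁ g₂ : ℝ → ℝ) : ℝ → ℝ :=
  fun t => if t ≤ m then g₁ t else g₂ t + (g₁ m - g₂ m)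

lemma glueShift_monotone {g₁ g₂ : ℝ → ℝ} (h₁ : Monotone g₁) (h₂ : Monotone g₂) :
    Monotone (glueShift m g₁ g₂) := by
  intro s t hst
  unfold glueShift
  by_cases hs : s ≤ m <;> by_cases ht : t ≤ m
  · rw [if_pos hs, if_pos ht]; exact h₁ hst
  · rw [if_pos hs, if_neg ht]
    have e1 : g₁ s ≤ g₁ m := h₁ hs
    have e2 : g₂ m ≤ g₂ t := h₂ (by linarith)
    linarith
  · exact absurd (le_trans hst ht) hs
  · rw [if_neg hs, if_neg ht]
    have := h₂ hst
    linarith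

lemma glueShift_eqOn_left {g₁ g₂ : ℝ → ℝ} :
    Set.EqOn (glueShift m g₁ g₂) g₁ (Set.Icc a m) := by
  intro t ht
  unfold glueShift
  rw [if_pos ht.2]

lemma glueShift_eqOn_right {g₁ g₂ : ℝ → ℝ} :
    Set.EqOn (glueShift m g₁ g₂) (fun t => g₂ t + (g₁ m - g₂ m)) (Set.Icc m b) := by
  intro t ht
  unfold glueShift
  rcases lt_or_eq_of_le ht.1 with h | h
  · rw [if_neg (by linarith)]
  · rw [← h, if_pos le_rfl]
    ring

end MainAssembly
noncomputable section MainProof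
open Function Set

variable {a b m : ℝ} {α f : ℝ → ℝ}

lemma main_forward (hm : m ∈ Set.Ioo a b) (hf : BddOn a b f)
    (h : RDSIntegrable a b α f) :
    RDSIntegrable a m α f ∧ RDSIntegrable m b α f := by
  obtain ⟨p, q, hp, hq, hd, ip, iq⟩ := h
  have hab : a < b := lt_trans hm.1 hm.2
  have hPm : Monotone (clampExt a b p) := clampExt_monotone hab.le hp
  have hQm : Monotone (clampExt a b q) := clampExt_monotone hab.le hq
  have ipP : RDSIntegrableInc a b (clampExt a b p) f := (incClamp hp hab.le).1 ip
  have iqQ : RDSIntegrableInc a b (clampExt a b q) f := (incClamp hq hab.le).1 iq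
  obtain ⟨ipP1, ipP2⟩ := (splitInc hPm hm hf).1 ipP
  obtain ⟨iqQ1, iqQ2⟩ := (splitInc hQm hm hf).1 iqQ
  constructor
  · refine ⟨clampExt a b p, clampExt a b q, hPm.monotoneOn _, hQm.monotoneOn _, ?_, ipP1, iqQ1⟩
    intro t ht
    have ht' : t ∈ Set.Icc a b := Icc_subset_Icc le_rfl hm.2.le ht
    have e1 : p t = clampExt a b p t := clampExt_eqOn ht'
    have e2 : q t = clampExt a b q t := clampExt_eqOn ht'
    rw [← e1, ← e2]
    exact hd t ht'
  · refine ⟨clampExt a b p, clampExt a b q, hPm.monotoneOn _, hQm.monotoneOn _, ?_, ipP2, iqQ2⟩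
    intro t ht
    have ht' : t ∈ Set.Icc a b := Icc_subset_Icc hm.1.le le_rfl ht
    have e1 : p t = clampExt a b p t := clampExt_eqOn ht'
    have e2 : q t = clampExt a b q t := clampExt_eqOn ht'
    rw [← e1, ← e2]
    exact hd t ht'

lemma main_backward (hm : m ∈ Set.Ioo a b) (hf : BddOn a b f)
    (h1 : RDSIntegrable a m α f) (h2 : RDSIntegrable m b α f) :
    RDSIntegrable a b α f := by
  obtain ⟨p₁, q₁, hp₁, hq₁, hd₁, ip₁, iq₁⟩ := h1
  obtain ⟨p₂, q₂, hp₂, hq₂, hd₂, ip₂, iq₂⟩ := h2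
  have ham : a < m := hm.1
  have hmb : m < b := hm.2
  have hab : a < b := lt_trans ham hmb
  have hf1 : BddOn a m f := hf.mono (Icc_subset_Icc le_rfl hmb.le)
  have hf2 : BddOn m b f := hf.mono (Icc_subset_Icc ham.le le_rfl)
  have hE1p : Monotone (clampExt a m p₁) := clampExt_monotone ham.le hp₁
  have hE1q : Monotone (clampExt a m q₁) := clampExt_monotone ham.le hq₁
  have hE2p : Monotone (clampExt m b p₂) := clampExt_monotone hmb.le hp₂
  have hE2q : Monotone (clampExt m b q₂) := clampExt_monotone hmb.le hq₂
  have hGpm : Monotone (glueShift m (clampExt a m p₁) (clampExt m b p₂)) :=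
    glueShift_monotone hE1p hE2p
  have hGqm : Monotone (glueShift m (clampExt a m q₁) (clampExt m b q₂)) :=
    glueShift_monotone hE1q hE2q
  have incLeft : ∀ (e₁ e₂ : ℝ → ℝ), Monotone e₁ →
      RDSIntegrableInc a m e₁ f → RDSIntegrableInc a m (glueShift m e₁ e₂) f := by
    intro e₁ e₂ he₁ hinc
    have c1 := envelope_congr (f := f) he₁
      (glueShift_eqOn_left (m := m) (a := a) (g₁ := e₁) (g₂ := e₂)) le_rfl le_rfl
    unfold RDSIntegrableInc at hinc ⊢
    rw [c1.1, c1.2]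
    exact hinc
  have incRight : ∀ (e₁ e₂ : ℝ → ℝ), Monotone e₂ →
      RDSIntegrableInc m b e₂ f → RDSIntegrableInc m b (glueShift m e₁ e₂) f := by
    intro e₁ e₂ he₂ hinc
    have hsh : Monotone (fun t => e₂ t + (e₁ m - e₂ m)) := by
      intro s t hst
      have := he₂ hst
      dsimp only
      linarith
    have c1 := envelope_congr (f := f) hsh
      (glueShift_eqOn_right (m := m) (b := b) (g₁ := e₁) (g₂ := e₂)) le_rfl le_rfl
    have c2 := envelope_shift (a := m) (b := b) (f := f) (c := e₁ m - e₂ m) he₂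
    unfold RDSIntegrableInc at hinc ⊢
    rw [c1.1, c1.2, c2.1, c2.2]
    exact hinc
  have iE1p : RDSIntegrableInc a m (clampExt a m p₁) f := (incClamp hp₁ ham.le).1 ip₁
  have iE1q : RDSIntegrableInc a m (clampExt a m q₁) f := (incClamp hq₁ ham.le).1 iq₁
  have iE2p : RDSIntegrableInc m b (clampExt m b p₂) f := (incClamp hp₂ hmb.le).1 ip₂
  have iE2q : RDSIntegrableInc m b (clampExt m b q₂) f := (incClamp hq₂ hmb.le).1 iq₂
  have incGp : RDSIntegrableInc a b (glueShift m (clampExt a m p₁) (clampExt m b p₂)) f :=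
    (splitInc hGpm hm hf).2 ⟨incLeft _ _ hE1p iE1p, incRight _ _ hE2p iE2p⟩
  have incGq : RDSIntegrableInc a b (glueShift m (clampExt a m q₁) (clampExt m b q₂)) f :=
    (splitInc hGqm hm hf).2 ⟨incLeft _ _ hE1q iE1q, incRight _ _ hE2q iE2q⟩
  refine ⟨_, _, hGpm.monotoneOn _, hGqm.monotoneOn _, ?_, incGp, incGq⟩
  intro t ht
  rcases le_or_gt t m with h | h
  · have ht1 : t ∈ Set.Icc a m := ⟨ht.1, h⟩
    have e1 : glueShift m (clampExt a m p₁) (clampExt m b p₂) t = clampExt a m p₁ t :=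
      glueShift_eqOn_left ht1
    have e2 : glueShift m (clampExt a m q₁) (clampExt m b q₂) t = clampExt a m q₁ t :=
      glueShift_eqOn_left ht1
    have e3 : p₁ t = clampExt a m p₁ t := clampExt_eqOn ht1
    have e4 : q₁ t = clampExt a m q₁ t := clampExt_eqOn ht1
    rw [e1, e2, ← e3, ← e4]
    exact hd₁ t ht1
  · have ht2 : t ∈ Set.Icc m b := ⟨h.le, ht.2⟩
    have hm1 : m ∈ Set.Icc a m := ⟨ham.le, le_rfl⟩
    have hm2 : m ∈ Set.Icc m b := ⟨le_rfl, hmb.le⟩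
    have e1 : glueShift m (clampExt a m p₁) (clampExt m b p₂) t =
        clampExt m b p₂ t + (clampExt a m p₁ m - clampExt m b p₂ m) :=
      glueShift_eqOn_right ht2
    have e2 : glueShift m (clampExt a m q₁) (clampExt m b q₂) t =
        clampExt m b q₂ t + (clampExt a m q₁ m - clampExt m b q₂ m) :=
      glueShift_eqOn_right ht2
    have e3 : p₂ t = clampExt m b p₂ t := clampExt_eqOn ht2
    have e4 : q₂ t = clampExt m b q₂ t := clampExt_eqOn ht2
    have e5 : p₁ m = clampExt a m p₁ m := clampExt_eqOn hm1
    have e6 : q₁ m = clampExt a m q₁ m := clampExt_eqOn hm1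
    have e7 : p₂ m = clampExt m b p₂ m := clampExt_eqOn hm2
    have e8 : q₂ m = clampExt m b q₂ m := clampExt_eqOn hm2
    have d1 := hd₁ m hm1
    have d2 := hd₂ m hm2
    have d3 := hd₂ t ht2
    rw [e1, e2, ← e3, ← e4, ← e5, ← e6, ← e7, ← e8]
    linarith

lemma main_sum (hm : m ∈ Set.Ioo a b) (hf : BddOn a b f)
    (h : RDSIntegrable a b α f) (h1 : RDSIntegrable a m α f) (h2 : RDSIntegrable m b α f) :
    RDSIntegral a m α f + RDSIntegral m b α f = RDSIntegral a b α f := by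
  have ham : a < m := hm.1
  have hmb : m < b := hm.2
  have hab : a < b := lt_trans ham hmb
  have hf1 : BddOn a m f := hf.mono (Icc_subset_Icc le_rfl hmb.le)
  have hf2 : BddOn m b f := hf.mono (Icc_subset_Icc ham.le le_rfl)
  unfold RDSIntegral
  rw [dif_pos h, dif_pos h1, dif_pos h2]
  unfold RDSIntegralInc
  obtain ⟨hDpm, hDmm, hDd, hDip, hDim⟩ := h.choose_spec.choose_spec
  obtain ⟨hApm, hAmm, hAd, hAip, hAim⟩ := h1.choose_spec.choose_spec
  obtain ⟨hBpm, hBmm, hBd, hBip, hBim⟩ := h2.choose_spec.choose_spec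
  set Dp := h.choose
  set Dm := h.choose_spec.choose
  set Ap := h1.choose
  set Am := h1.choose_spec.choose
  set Bp := h2.choose
  set Bm := h2.choose_spec.choose
  -- clamped versions
  have hEDpm : Monotone (clampExt a b Dp) := clampExt_monotone hab.le hDpm
  have hEDmm : Monotone (clampExt a b Dm) := clampExt_monotone hab.le hDmm
  have hEApm : Monotone (clampExt a m Ap) := clampExt_monotone ham.le hApm
  have hEAmm : Monotone (clampExt a m Am) := clampExt_monotone ham.le hAmm
  have hEBpm : Monotone (clampExt m b Bp) := clampExt_monotone hmb.le hBpm
  have hEBmm : Monotone (clampExt m b Bm) := clampExt_monotone hmb.le hBmm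
  have iEDp : RDSIntegrableInc a b (clampExt a b Dp) f := (incClamp hDpm hab.le).1 hDip
  have iEDm : RDSIntegrableInc a b (clampExt a b Dm) f := (incClamp hDmm hab.le).1 hDim
  obtain ⟨iEDp1, iEDp2⟩ := (splitInc hEDpm hm hf).1 iEDp
  obtain ⟨iEDm1, iEDm2⟩ := (splitInc hEDmm hm hf).1 iEDm
  have iEAp : RDSIntegrableInc a m (clampExt a m Ap) f := (incClamp hApm ham.le).1 hAip
  have iEAm : RDSIntegrableInc a m (clampExt a m Am) f := (incClamp hAmm ham.le).1 hAim
  have iEBp : RDSIntegrableInc m b (clampExt m b Bp) f := (incClamp hBpm hmb.le).1 hBip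
  have iEBm : RDSIntegrableInc m b (clampExt m b Bm) f := (incClamp hBmm hmb.le).1 hBim
  -- well-definedness on [a,m]
  have W1 : upperRDS a m (clampExt a m Ap) f - upperRDS a m (clampExt a m Am) f =
      upperRDS a m (clampExt a b Dp) f - upperRDS a m (clampExt a b Dm) f := by
    apply upper_sub_eq hEApm hEAmm hEDpm hEDmm ham hf1 ?_ iEAp iEAm iEDp1 iEDm1
    intro t ht
    have ht' : t ∈ Set.Icc a b := Icc_subset_Icc le_rfl hmb.le ht
    have e1 : Ap t = clampExt a m Ap t := clampExt_eqOn ht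
    have e2 : Am t = clampExt a m Am t := clampExt_eqOn ht
    have e3 : Dp t = clampExt a b Dp t := clampExt_eqOn ht'
    have e4 : Dm t = clampExt a b Dm t := clampExt_eqOn ht'
    have d1 := hAd t ht
    have d2 := hDd t ht'
    rw [← e1, ← e2, ← e3, ← e4]
    linarith
  -- well-definedness on [m,b]
  have W2 : upperRDS m b (clampExt m b Bp) f - upperRDS m b (clampExt m b Bm) f =
      upperRDS m b (clampExt a b Dp) f - upperRDS m b (clampExt a b Dm) f := by
    apply upper_sub_eq hEBpm hEBmm hEDpm hEDmm hmb hf2 ?_ iEBp iEBm iEDp2 iEDm2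
    intro t ht
    have ht' : t ∈ Set.Icc a b := Icc_subset_Icc ham.le le_rfl ht
    have e1 : Bp t = clampExt m b Bp t := clampExt_eqOn ht
    have e2 : Bm t = clampExt m b Bm t := clampExt_eqOn ht
    have e3 : Dp t = clampExt a b Dp t := clampExt_eqOn ht'
    have e4 : Dm t = clampExt a b Dm t := clampExt_eqOn ht'
    have d1 := hBd t ht
    have d2 := hDd t ht'
    rw [← e1, ← e2, ← e3, ← e4]
    linarith
  -- splitting of the clamped D envelopes
  have S1 : upperRDS a b (clampExt a b Dp) f =
      upperRDS a m (clampExt a b Dp) f + upperRDS m b (clampExt a b Dp) f :=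
    upper_split hEDpm hm hf
  have S2 : upperRDS a b (clampExt a b Dm) f =
      upperRDS a m (clampExt a b Dm) f + upperRDS m b (clampExt a b Dm) f :=
    upper_split hEDmm hm hf
  -- congruences back to the chosen functions
  have cDp : upperRDS a b Dp f = upperRDS a b (clampExt a b Dp) f :=
    (clamp_congr hDpm hab.le le_rfl le_rfl).1
  have cDm : upperRDS a b Dm f = upperRDS a b (clampExt a b Dm) f :=
    (clamp_congr hDmm hab.le le_rfl le_rfl).1
  have cAp : upperRDS a m Ap f = upperRDS a m (clampExt a m Ap) f :=
    (clamp_congr hApm ham.le le_rfl le_rfl).1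
  have cAm : upperRDS a m Am f = upperRDS a m (clampExt a m Am) f :=
    (clamp_congr hAmm ham.le le_rfl le_rfl).1
  have cBp : upperRDS m b Bp f = upperRDS m b (clampExt m b Bp) f :=
    (clamp_congr hBpm hmb.le le_rfl le_rfl).1
  have cBm : upperRDS m b Bm f = upperRDS m b (clampExt m b Bm) f :=
    (clamp_congr hBmm hmb.le le_rfl le_rfl).1
  linarith

end MainProof

theorem stmt10 (a b m : ℝ) (hm : m ∈ Set.Ioo a b) (α f : ℝ → ℝ)
    (hα : BoundedVariationOn α (Set.Icc a b)) (hf : BddOn a b f) :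
    (RDSIntegrable a b α f ↔ RDSIntegrable a m α f ∧ RDSIntegrable m b α f) ∧
    (RDSIntegrable a b α f →
      RDSIntegral a m α f + RDSIntegral m b α f = RDSIntegral a b α f) := by
  have part1 : RDSIntegrable a b α f ↔ RDSIntegrable a m α f ∧ RDSIntegrable m b α f :=
    ⟨fun h => main_forward hm hf h, fun h => main_backward hm hf h.1 h.2⟩
  exact ⟨part1, fun h => main_sum hm hf h (part1.1 h).1 (part1.1 h).2⟩
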